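/- arXiv:2212.10648 — 6 statements merged into one kernel-verified Lean document; each statement's English description precedes it below -/
import Mathlib

section
/- For all u, φ ∈ V_D, the function Ku belongs to L²(ℝ) and B_D[u, φ] = −∫_Ω Ku(x) φ(x) dx; that is, the bilinear form B_D represents the negative of the nonlocal operator K against test functions in V_D. -/
open MeasureTheory Set Real

/-- The nonlocal operator `Ku(x) = ∫_ℝ (u(y) − u(x)) γ(x − y) dy`. -/
noncomputable def Knl (γ u : ℝ → ℝ) (x : ℝ) : ℝ := ∫ y, (u y - u x) * γ (x - y)

/-- The bilinear form
`B_D[u, φ] = (1/2) ∫_ℝ ∫_ℝ (u(y) − u(x)) γ(x − y) (φ(y) − φ(x)) dy dx`. -/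
noncomputable def BD (γ u φ : ℝ → ℝ) : ℝ :=
  (1 / 2) * ∫ x, ∫ y, (u y - u x) * γ (x - y) * (φ y - φ x)

/-- Membership in `V_D`: `u ∈ L²(ℝ)` and `u = 0` a.e. outside `Ω = [−L, L]`. -/
def MemVD (L : ℝ) (u : ℝ → ℝ) : Prop :=
  MemLp u 2 ∧ ∀ᵐ x : ℝ, x ∉ Icc (-L) L → u x = 0

section Aux

open scoped ENNReal NNReal

private lemma qmp_sub : Measure.QuasiMeasurePreserving (fun p : ℝ × ℝ => p.1 - p.2) ((volume : Measure ℝ).prod volume) volume :=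
  Measure.quasiMeasurePreserving_fst.comp
    (measurePreserving_sub_prod volume volume).quasiMeasurePreserving

/-- Integrability of the convolution-type integrand `f(y) γ(x-y)` on the plane. -/
private lemma int_conv {f γ : ℝ → ℝ} (hf : Integrable f) (hγ : Integrable γ) :
    Integrable (fun p : ℝ × ℝ => f p.2 * γ (p.1 - p.2)) ((volume : Measure ℝ).prod volume) :=
  hf.convolution_integrand (ContinuousLinearMap.mul ℝ ℝ) hγ

/-- Integrability of `f(x) γ(x-y)` on the plane, for even `γ`. -/
private lemma int_conv' {f γ : ℝ → ℝ} (hγe : ∀ z, γ (-z) = γ z)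
    (hf : Integrable f) (hγ : Integrable γ) :
    Integrable (fun p : ℝ × ℝ => f p.1 * γ (p.1 - p.2)) ((volume : Measure ℝ).prod volume) := by
  have h := (int_conv hf hγ).swap
  have he : ((fun p : ℝ × ℝ => f p.2 * γ (p.1 - p.2)) ∘ Prod.swap)
      = fun p : ℝ × ℝ => f p.1 * γ (p.1 - p.2) := by
    funext p
    simp only [Function.comp_apply, Prod.swap, Prod.fst, Prod.snd]
    rw [← hγe (p.1 - p.2), neg_sub]
  rwa [he] at h

/-- A compactly supported `L²` function is integrable. -/
private lemma memVD_integrable {L : ℝ} {v : ℝ → ℝ} (hv : MemVD L v) : Integrable v := by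
  have hfin : IsFiniteMeasure ((volume : Measure ℝ).restrict (Icc (-L) L)) := by
    constructor
    rw [Measure.restrict_apply_univ]
    exact measure_Icc_lt_top
  have h1 : IntegrableOn v (Icc (-L) L) := by
    have h2 : MemLp v 2 ((volume : Measure ℝ).restrict (Icc (-L) L)) :=
      hv.1.restrict _
    exact memLp_one_iff_integrable.mp (h2.mono_exponent (by norm_num))
  have hind := h1.integrable_indicator (measurableSet_Icc (a := -L) (b := L))
  refine hind.congr ?_
  filter_upwards [hv.2] with x hx
  by_cases h : x ∈ Icc (-L) L
  · simp [indicator_of_mem h]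
  · simp [indicator_of_notMem h, hx h]

/-- `L² * L²` is integrable (via AM-GM domination). -/
private lemma int_mul_of_L2 {f g : ℝ → ℝ} (hf : MemLp f 2 (volume : Measure ℝ))
    (hg : MemLp g 2 (volume : Measure ℝ)) : Integrable (fun x => f x * g x) := by
  refine Integrable.mono' (((hf.integrable_sq.add hg.integrable_sq).const_mul (1/2)))
    (hf.aestronglyMeasurable.mul hg.aestronglyMeasurable) ?_
  filter_upwards with x
  simp only [Pi.add_apply]
  rw [Real.norm_eq_abs, abs_mul]
  nlinarith [sq_nonneg (|f x| - |g x|), abs_nonneg (f x), abs_nonneg (g x),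
    sq_abs (f x), sq_abs (g x)]

/-- The mixed term `f(y) g(x) γ(x-y)` is integrable on the plane. -/
private lemma int_mixed {f g γ : ℝ → ℝ} (hγe : ∀ z, γ (-z) = γ z) (hγ0 : ∀ z, 0 ≤ γ z)
    (hγ : Integrable γ) (hγm : AEStronglyMeasurable γ (volume : Measure ℝ))
    (hf : MemLp f 2 (volume : Measure ℝ)) (hg : MemLp g 2 (volume : Measure ℝ)) :
    Integrable (fun p : ℝ × ℝ => f p.2 * g p.1 * γ (p.1 - p.2)) ((volume : Measure ℝ).prod volume) := by
  have hmeas : AEStronglyMeasurable (fun p : ℝ × ℝ => f p.2 * g p.1 * γ (p.1 - p.2)) ((volume : Measure ℝ).prod volume) :=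
    (((hf.aestronglyMeasurable.comp_quasiMeasurePreserving
        Measure.quasiMeasurePreserving_snd).mul
      (hg.aestronglyMeasurable.comp_quasiMeasurePreserving
        Measure.quasiMeasurePreserving_fst)).mul
      (hγm.comp_quasiMeasurePreserving qmp_sub))
  have hdom : Integrable (fun p : ℝ × ℝ =>
      (1/2) * ((f p.2)^2 * γ (p.1 - p.2) + (g p.1)^2 * γ (p.1 - p.2))) ((volume : Measure ℝ).prod volume) :=
    ((int_conv hf.integrable_sq hγ).add (int_conv' hγe hg.integrable_sq hγ)).const_mul (1/2)
  refine Integrable.mono' hdom hmeas ?_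
  filter_upwards with p
  have h0 := hγ0 (p.1 - p.2)
  rw [Real.norm_eq_abs, abs_mul, abs_mul, abs_of_nonneg h0]
  nlinarith [sq_nonneg (|f p.2| - |g p.1|), abs_nonneg (f p.2), abs_nonneg (g p.1),
    sq_abs (f p.2), sq_abs (g p.1), mul_nonneg (mul_nonneg (abs_nonneg (f p.2))
      (abs_nonneg (g p.1))) h0]

/-- Young's inequality, `p = 2` case: the convolution of an `L¹∩L²` function with a
nonnegative `L¹` kernel is in `L²`. -/
private lemma conv_memL2 {γ u : ℝ → ℝ} (hγ : Integrable γ) (hγ0 : ∀ z, 0 ≤ γ z)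
    (hu2 : MemLp u 2 (volume : Measure ℝ)) (hu1 : Integrable u) :
    MemLp (fun x => ∫ y, u y * γ (x - y)) 2 (volume : Measure ℝ) := by
  have hma : AEStronglyMeasurable (fun p : ℝ × ℝ => u p.2 * γ (p.1 - p.2)) ((volume : Measure ℝ).prod volume) :=
    (hu1.aestronglyMeasurable.comp_quasiMeasurePreserving
        Measure.quasiMeasurePreserving_snd).mul
      (hγ.aestronglyMeasurable.comp_quasiMeasurePreserving qmp_sub)
  have hm : AEStronglyMeasurable (fun x => ∫ y, u y * γ (x - y)) (volume : Measure ℝ) :=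
    hma.integral_prod_right'
  refine ⟨hm, ?_⟩
  set U : ℝ → ℝ≥0∞ := fun y => (‖u y‖₊ : ℝ≥0∞) with hU
  set G : ℝ → ℝ≥0∞ := fun z => (‖γ z‖₊ : ℝ≥0∞) with hG
  have hUm : AEMeasurable U (volume : Measure ℝ) := hu2.aestronglyMeasurable.enorm
  have hGm : AEMeasurable G (volume : Measure ℝ) := hγ.aestronglyMeasurable.enorm
  have hGfin : ∀ z, G z ≠ ⊤ := fun z => ENNReal.coe_ne_top
  have hUfin : ∀ z, U z ≠ ⊤ := fun z => ENNReal.coe_ne_top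
  have IG : ∫⁻ z, G z < ⊤ := hγ.hasFiniteIntegral
  have IU : ∫⁻ y, U y ^ 2 < ⊤ := by
    have h := hu2.integrable_sq.hasFiniteIntegral
    refine lt_of_eq_of_lt ?_ h
    apply lintegral_congr
    intro y
    rw [hU]
    simp [pow_two, nnnorm_mul, ENNReal.coe_mul]
    rfl
  -- Cauchy-Schwarz with weight
  have key : ∀ x : ℝ, (∫⁻ y, U y * G (x - y)) ^ 2
      ≤ (∫⁻ y, U y ^ 2 * G (x - y)) * ∫⁻ z, G z := by
    intro x
    have hGc : AEMeasurable (fun y => G (x - y)) (volume : Measure ℝ) :=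
      hGm.comp_quasiMeasurePreserving
        (Measure.measurePreserving_sub_left volume x).quasiMeasurePreserving
    have hCS := ENNReal.lintegral_mul_le_Lp_mul_Lq (volume : Measure ℝ)
      (p := 2) (q := 2) ⟨by norm_num, by norm_num, by norm_num⟩
      (f := fun y => (U y ^ 2 * G (x - y)) ^ (1/2 : ℝ))
      (g := fun y => (G (x - y)) ^ (1/2 : ℝ))
      ((((hUm.pow_const 2).mul hGc).pow_const (1/2 : ℝ))) ((hGc.pow_const (1/2 : ℝ)))
    have hfg : ∀ y : ℝ, ((fun y => (U y ^ 2 * G (x - y)) ^ (1/2 : ℝ)) *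
        (fun y => (G (x - y)) ^ (1/2 : ℝ))) y = U y * G (x - y) := by
      intro y
      simp only [Pi.mul_apply]
      rw [← ENNReal.mul_rpow_of_nonneg _ _ (by norm_num : (0:ℝ) ≤ 1/2)]
      rw [show U y ^ 2 * G (x - y) * G (x - y) = (U y * G (x - y)) ^ 2 by ring]
      rw [← ENNReal.rpow_natCast (U y * G (x - y)) 2, ← ENNReal.rpow_mul]
      norm_num
    have hpow : ∀ (a : ℝ≥0∞), (a ^ (1/2 : ℝ)) ^ (2 : ℝ) = a := by
      intro a
      rw [← ENNReal.rpow_mul]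
      norm_num
    rw [lintegral_congr hfg] at hCS
    simp only [hpow] at hCS
    have hsub : ∫⁻ y, G (x - y) = ∫⁻ z, G z := by
      have hmp := Measure.measurePreserving_sub_left (volume : Measure ℝ) x
      calc ∫⁻ y, G (x - y)
          = ∫⁻ z, G z ∂(Measure.map (fun t : ℝ => x - t) volume) :=
            (lintegral_map' (by rw [hmp.map_eq]; exact hGm)
              hmp.measurable.aemeasurable).symm
        _ = ∫⁻ z, G z := by rw [hmp.map_eq]
    rw [hsub] at hCS
    calc (∫⁻ y, U y * G (x - y)) ^ 2
        ≤ ((∫⁻ y, U y ^ 2 * G (x - y)) ^ (1/(2:ℝ)) * (∫⁻ z, G z) ^ (1/(2:ℝ))) ^ 2 := by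
          exact pow_le_pow_left' hCS 2
      _ = (∫⁻ y, U y ^ 2 * G (x - y)) * ∫⁻ z, G z := by
          rw [mul_pow, ← ENNReal.rpow_natCast (_ ^ (1/(2:ℝ))) 2,
            ← ENNReal.rpow_natCast (_ ^ (1/(2:ℝ))) 2, ← ENNReal.rpow_mul, ← ENNReal.rpow_mul]
          norm_num
  -- the eLpNorm bound
  rw [MemLp] at hu2
  rw [eLpNorm_eq_lintegral_rpow_enorm_toReal (by norm_num) (by norm_num)]
  refine ENNReal.rpow_lt_top_of_nonneg (by positivity) ?_
  have hmm : AEMeasurable (fun p : ℝ × ℝ => U p.2 ^ 2 * G (p.1 - p.2)) ((volume : Measure ℝ).prod volume) :=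
    ((hUm.comp_quasiMeasurePreserving Measure.quasiMeasurePreserving_snd).pow_const 2).mul
      (hGm.comp_quasiMeasurePreserving qmp_sub)
  have hchain : ∫⁻ x, (‖(∫ y, u y * γ (x - y))‖₊ : ℝ≥0∞) ^ (2 : ℕ)
      ≤ (∫⁻ z, G z) * ((∫⁻ y, U y ^ 2) * ∫⁻ z, G z) := by
    calc ∫⁻ x, (‖(∫ y, u y * γ (x - y))‖₊ : ℝ≥0∞) ^ (2 : ℕ)
        ≤ ∫⁻ x, (∫⁻ y, U y * G (x - y)) ^ 2 := by
          refine lintegral_mono fun x => ?_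
          refine pow_le_pow_left' ?_ 2
          refine (enorm_integral_le_lintegral_enorm _).trans_eq ?_
          apply lintegral_congr
          intro y
          simp [hU, hG, nnnorm_mul, ENNReal.coe_mul]
          rfl
      _ ≤ ∫⁻ x, (∫⁻ y, U y ^ 2 * G (x - y)) * ∫⁻ z, G z := lintegral_mono key
      _ = (∫⁻ x, ∫⁻ y, U y ^ 2 * G (x - y)) * ∫⁻ z, G z := by
          rw [lintegral_mul_const' _ _ IG.ne]
      _ = (∫⁻ y, ∫⁻ x, U y ^ 2 * G (x - y)) * ∫⁻ z, G z := by
          rw [lintegral_lintegral_swap hmm]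
      _ = (∫⁻ y, U y ^ 2 * ∫⁻ x, G (x - y)) * ∫⁻ z, G z := by
          congr 1
          apply lintegral_congr
          intro y
          rw [lintegral_const_mul' _ _ (by
            simp only [hU]
            exact ENNReal.pow_ne_top (hUfin y))]
      _ = (∫⁻ z, G z) * ((∫⁻ y, U y ^ 2) * ∫⁻ z, G z) := by
          have : ∀ y : ℝ, ∫⁻ x, G (x - y) = ∫⁻ z, G z := fun y =>
            lintegral_sub_right_eq_self G y
          simp_rw [this]
          rw [lintegral_mul_const' _ _ IG.ne]
          ring
  have hfin : (∫⁻ z, G z) * ((∫⁻ y, U y ^ 2) * ∫⁻ z, G z) < ⊤ :=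
    ENNReal.mul_lt_top IG (ENNReal.mul_lt_top IU IG)
  have h2 : ∫⁻ x, (‖(∫ y, u y * γ (x - y))‖₊ : ℝ≥0∞) ^ ((2:ℝ≥0∞)).toReal < ⊤ := by
    refine lt_of_le_of_lt ?_ (hchain.trans_lt hfin)
    apply le_of_eq
    apply lintegral_congr
    intro x
    rw [← ENNReal.rpow_natCast]
    norm_num
  exact h2.ne

end Aux

/-- For `u, φ ∈ V_D`, `Ku ∈ L²(ℝ)` and `B_D[u, φ] = −∫_Ω Ku(x) φ(x) dx`. -/
theorem BD_represents_K (L : ℝ) (hL : 0 < L) (γ : ℝ → ℝ)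
    (hγeven : ∀ z, γ (-z) = γ z) (hγpos : ∀ z, 0 < γ z)
    (hγL1 : Integrable γ) (hγL2 : MemLp γ 2)
    (hγmom : Integrable (fun z => z ^ 2 * γ z))
    (u φ : ℝ → ℝ) (hu : MemVD L u) (hφ : MemVD L φ) :
    MemLp (Knl γ u) 2 ∧
      BD γ u φ = - ∫ x in Icc (-L) L, Knl γ u x * φ x := by
  have hγ0 : ∀ z, 0 ≤ γ z := fun z => (hγpos z).le
  have hu1 : Integrable u := memVD_integrable hu
  have hφ1 : Integrable φ := memVD_integrable hφ
  have hum := hu.1.aestronglyMeasurable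
  have hφm := hφ.1.aestronglyMeasurable
  have hγm := hγL1.aestronglyMeasurable
  set M : Measure (ℝ × ℝ) := (volume : Measure ℝ).prod volume with hM
  -- the four product terms
  have hT1 : Integrable (fun p : ℝ × ℝ => (u p.2 * φ p.2) * γ (p.1 - p.2)) M :=
    int_conv (int_mul_of_L2 hu.1 hφ.1) hγL1
  have hT4 : Integrable (fun p : ℝ × ℝ => (u p.1 * φ p.1) * γ (p.1 - p.2)) M :=
    int_conv' hγeven (int_mul_of_L2 hu.1 hφ.1) hγL1
  have hT2 : Integrable (fun p : ℝ × ℝ => u p.2 * φ p.1 * γ (p.1 - p.2)) M :=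
    int_mixed hγeven hγ0 hγL1 hγm hu.1 hφ.1
  have hT3 : Integrable (fun p : ℝ × ℝ => φ p.2 * u p.1 * γ (p.1 - p.2)) M :=
    int_mixed hγeven hγ0 hγL1 hγm hφ.1 hu.1
  -- integrability of G and H
  have hG : Integrable (fun p : ℝ × ℝ => (u p.2 - u p.1) * γ (p.1 - p.2) * φ p.2) M := by
    have heq : (fun p : ℝ × ℝ => (u p.2 - u p.1) * γ (p.1 - p.2) * φ p.2)
        = fun p : ℝ × ℝ => (u p.2 * φ p.2) * γ (p.1 - p.2)
          - φ p.2 * u p.1 * γ (p.1 - p.2) := by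
      funext p; ring
    rw [heq]
    exact hT1.sub hT3
  have hH : Integrable (fun p : ℝ × ℝ => (u p.2 - u p.1) * γ (p.1 - p.2) * φ p.1) M := by
    have heq : (fun p : ℝ × ℝ => (u p.2 - u p.1) * γ (p.1 - p.2) * φ p.1)
        = fun p : ℝ × ℝ => u p.2 * φ p.1 * γ (p.1 - p.2)
          - (u p.1 * φ p.1) * γ (p.1 - p.2) := by
      funext p; ring
    rw [heq]
    exact hT2.sub hT4
  have hF : Integrable (fun p : ℝ × ℝ => (u p.2 - u p.1) * γ (p.1 - p.2) * (φ p.2 - φ p.1)) M := by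
    have heq : (fun p : ℝ × ℝ => (u p.2 - u p.1) * γ (p.1 - p.2) * (φ p.2 - φ p.1))
        = fun p : ℝ × ℝ => (u p.2 - u p.1) * γ (p.1 - p.2) * φ p.2
          - (u p.2 - u p.1) * γ (p.1 - p.2) * φ p.1 := by
      funext p; ring
    rw [heq]
    exact hG.sub hH
  -- swap identity : ∫ G = - ∫ H
  have hswap : ∫ p, (u p.2 - u p.1) * γ (p.1 - p.2) * φ p.2 ∂M
      = - ∫ p, (u p.2 - u p.1) * γ (p.1 - p.2) * φ p.1 ∂M := by
    have h1 : ∫ p, (u p.2 - u p.1) * γ (p.1 - p.2) * φ p.2 ∂M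
        = ∫ p : ℝ × ℝ, (u (Prod.swap p).2 - u (Prod.swap p).1)
            * γ ((Prod.swap p).1 - (Prod.swap p).2) * φ (Prod.swap p).2 ∂M := by
      exact (integral_prod_swap
        (fun p : ℝ × ℝ => (u p.2 - u p.1) * γ (p.1 - p.2) * φ p.2)).symm
    rw [h1]
    have h2 : ∀ p : ℝ × ℝ, (u (Prod.swap p).2 - u (Prod.swap p).1)
        * γ ((Prod.swap p).1 - (Prod.swap p).2) * φ (Prod.swap p).2
        = - ((u p.2 - u p.1) * γ (p.1 - p.2) * φ p.1) := by
      intro p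
      simp only [Prod.swap, Prod.fst, Prod.snd]
      rw [← hγeven (p.1 - p.2), neg_sub]
      ring
    simp_rw [h2]
    exact integral_neg _
  -- the first part : MemLp
  have hconv : MemLp (fun x => ∫ y, u y * γ (x - y)) 2 (volume : Measure ℝ) :=
    conv_memL2 hγL1 hγ0 hu.1 hu1
  have hcu : MemLp (fun x => u x * ∫ z, γ z) 2 (volume : Measure ℝ) :=
    (hu.1.const_mul _).ae_eq (Filter.Eventually.of_forall fun x => mul_comm _ _)
  have haeK : Knl γ u =ᵐ[volume] fun x => (∫ y, u y * γ (x - y)) - u x * ∫ z, γ z := by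
    have hsec : ∀ᵐ x : ℝ ∂volume, Integrable (fun y => u y * γ (x - y)) := by
      have h := int_conv hu1 hγL1
      exact ((integrable_prod_iff ((int_conv hu1 hγL1).aestronglyMeasurable)).mp h).1
    filter_upwards [hsec] with x hx
    have hγx : Integrable (fun y => γ (x - y)) := hγL1.comp_sub_left x
    unfold Knl
    have heq : (fun y => (u y - u x) * γ (x - y))
        = fun y => u y * γ (x - y) - u x * γ (x - y) := by
      funext y; ring
    rw [heq, integral_sub hx (hγx.const_mul (u x)), integral_const_mul,
      integral_sub_left_eq_self γ volume x]
  have hKnl : MemLp (Knl γ u) 2 (volume : Measure ℝ) :=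
    (hconv.sub hcu).ae_eq haeK.symm
  refine ⟨hKnl, ?_⟩
  -- the second part
  unfold BD
  have hiter : ∫ x, ∫ y, (u y - u x) * γ (x - y) * (φ y - φ x)
      = ∫ p, (u p.2 - u p.1) * γ (p.1 - p.2) * (φ p.2 - φ p.1) ∂M :=
    integral_integral (f := fun x y => (u y - u x) * γ (x - y) * (φ y - φ x)) hF
  have hsplit : ∫ p, (u p.2 - u p.1) * γ (p.1 - p.2) * (φ p.2 - φ p.1) ∂M
      = (∫ p, (u p.2 - u p.1) * γ (p.1 - p.2) * φ p.2 ∂M)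
        - ∫ p, (u p.2 - u p.1) * γ (p.1 - p.2) * φ p.1 ∂M := by
    have heq : (fun p : ℝ × ℝ => (u p.2 - u p.1) * γ (p.1 - p.2) * (φ p.2 - φ p.1))
        = fun p : ℝ × ℝ => (u p.2 - u p.1) * γ (p.1 - p.2) * φ p.2
          - (u p.2 - u p.1) * γ (p.1 - p.2) * φ p.1 := by
      funext p; ring
    rw [heq]
    exact integral_sub hG hH
  have hHval : ∫ p, (u p.2 - u p.1) * γ (p.1 - p.2) * φ p.1 ∂M
      = ∫ x, Knl γ u x * φ x := by
    have h1 : ∫ p, (u p.2 - u p.1) * γ (p.1 - p.2) * φ p.1 ∂M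
        = ∫ x, ∫ y, (u y - u x) * γ (x - y) * φ x :=
      (integral_integral (f := fun x y => (u y - u x) * γ (x - y) * φ x) hH).symm
    rw [h1]
    congr 1
    funext x
    rw [integral_mul_const]
    rfl
  have hres : ∫ x in Icc (-L) L, Knl γ u x * φ x = ∫ x, Knl γ u x * φ x := by
    apply setIntegral_eq_integral_of_ae_compl_eq_zero
    filter_upwards [hφ.2] with x hx hxm
    rw [hx hxm, mul_zero]
  rw [hiter, hsplit, hswap, hHval, hres]
  ring
end

section
/- There exists a constant β > 0 such that B_D[u, u] ≥ β ‖u‖²_{L²(Ω)} for all u ∈ V_D; that is, the bilinear form B_D is coercive on V_D. -/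
open MeasureTheory Set Real

/-- The `L²` norm of `u` on a set `s`, `‖u‖_{L²(s)} = (∫_s u²)^{1/2}`. -/
noncomputable def l2normOn (s : Set ℝ) (u : ℝ → ℝ) : ℝ := Real.sqrt (∫ x in s, u x ^ 2)

/-- Coercivity of `B_D`: there is `β > 0` with `B_D[u, u] ≥ β ‖u‖²_{L²(Ω)}`
for all `u ∈ V_D`. -/
theorem BD_coercive (L : ℝ) (hL : 0 < L) (γ : ℝ → ℝ)
    (hγeven : ∀ z, γ (-z) = γ z) (hγpos : ∀ z, 0 < γ z)
    (hγL1 : Integrable γ) (hγL2 : MemLp γ 2)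
    (hγmom : Integrable (fun z => z ^ 2 * γ z)) :
    ∃ β : ℝ, 0 < β ∧
      ∀ u : ℝ → ℝ, MemVD L u →
        β * (∫ x in Icc (-L) L, u x ^ 2) ≤ BD γ u u := by
  have hγint : ∀ a b : ℝ, IntervalIntegrable γ volume a b := fun a b =>
    hγL1.intervalIntegrable
  set g : ℝ → ℝ := fun x => ∫ z in (x - 3*L)..(x - 2*L), γ z with hg
  have hgcont : Continuous g := by
    have hF : Continuous (fun t : ℝ => ∫ z in (0:ℝ)..t, γ z) :=
      intervalIntegral.continuous_primitive hγint 0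
    have : ∀ x : ℝ, g x = (∫ z in (0:ℝ)..(x - 2*L), γ z) - ∫ z in (0:ℝ)..(x - 3*L), γ z := by
      intro x
      have h1 := intervalIntegral.integral_add_adjacent_intervals
        (hγint 0 (x - 3*L)) (hγint (x - 3*L) (x - 2*L))
      simp only [hg]
      linarith
    rw [funext this]
    exact (hF.comp (continuous_id.sub continuous_const)).sub
      (hF.comp (continuous_id.sub continuous_const))
  have hgpos : ∀ x : ℝ, 0 < g x := fun x =>
    intervalIntegral.intervalIntegral_pos_of_pos (hγint _ _) hγpos (by linarith)
  obtain ⟨x₀, hx₀, hmin⟩ := isCompact_Icc.exists_isMinOn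
    (⟨0, by constructor <;> linarith⟩ : (Icc (-L) L).Nonempty) hgcont.continuousOn
  set c : ℝ := g x₀ with hc
  refine ⟨c / 2, half_pos (hgpos x₀), ?_⟩
  rintro u ⟨hu2, hu0⟩
  set F : ℝ × ℝ → ℝ := fun p => (u p.2 - u p.1) ^ 2 * γ (p.1 - p.2) with hF
  have husq : Integrable (fun x => u x ^ 2) := hu2.integrable_sq
  have hFnn : ∀ p, 0 ≤ F p := fun p => mul_nonneg (sq_nonneg _) (hγpos _).le
  -- measurability
  have hsub_qmp : Measure.QuasiMeasurePreserving (fun p : ℝ × ℝ => p.1 - p.2)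
      ((volume : Measure ℝ).prod volume) volume :=
    Measure.quasiMeasurePreserving_fst.comp
      (measurePreserving_sub_prod (volume : Measure ℝ) volume).quasiMeasurePreserving
  have hγcomp : AEStronglyMeasurable (fun p : ℝ × ℝ => γ (p.1 - p.2))
      ((volume : Measure ℝ).prod volume) :=
    hγL1.aestronglyMeasurable.comp_quasiMeasurePreserving hsub_qmp
  have hufst : AEStronglyMeasurable (fun p : ℝ × ℝ => u p.1)
      ((volume : Measure ℝ).prod volume) :=
    hu2.aestronglyMeasurable.comp_quasiMeasurePreserving Measure.quasiMeasurePreserving_fst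
  have husnd : AEStronglyMeasurable (fun p : ℝ × ℝ => u p.2)
      ((volume : Measure ℝ).prod volume) :=
    hu2.aestronglyMeasurable.comp_quasiMeasurePreserving Measure.quasiMeasurePreserving_snd
  have hFsm : AEStronglyMeasurable F ((volume : Measure ℝ).prod volume) := by
    have : F = fun p => ((u p.2 - u p.1) * (u p.2 - u p.1)) * γ (p.1 - p.2) := by
      funext p
      show (u p.2 - u p.1) ^ 2 * γ (p.1 - p.2) = _
      ring
    rw [this]
    exact (((husnd.sub hufst).mul (husnd.sub hufst)).mul hγcomp)
  -- integrability
  have hG1 : Integrable (fun p : ℝ × ℝ => u p.1 ^ 2 * γ (p.1 - p.2))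
      ((volume : Measure ℝ).prod volume) := by
    have hH : Integrable (fun q : ℝ × ℝ => u q.1 ^ 2 * γ q.2)
        ((volume : Measure ℝ).prod volume) := husq.mul_prod hγL1
    have hT := measurePreserving_prod_sub (volume : Measure ℝ) volume
    have h2 := (hT.integrable_comp hH.aestronglyMeasurable).mpr hH
    refine h2.congr (Filter.Eventually.of_forall fun p => ?_)
    simp only [Function.comp]
    rw [show p.1 - p.2 = -(p.2 - p.1) by ring, hγeven]
  have hG2 : Integrable (fun p : ℝ × ℝ => u p.2 ^ 2 * γ (p.1 - p.2))
      ((volume : Measure ℝ).prod volume) := by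
    have hH : Integrable (fun q : ℝ × ℝ => γ q.1 * u q.2 ^ 2)
        ((volume : Measure ℝ).prod volume) := hγL1.mul_prod husq
    have hT := measurePreserving_sub_prod (volume : Measure ℝ) volume
    have h2 := (hT.integrable_comp hH.aestronglyMeasurable).mpr hH
    refine h2.congr (Filter.Eventually.of_forall fun p => ?_)
    simp only [Function.comp]
    ring
  have hFint : Integrable F ((volume : Measure ℝ).prod volume) := by
    refine Integrable.mono' ((hG1.const_mul 2).add (hG2.const_mul 2)) hFsm
      (Filter.Eventually.of_forall fun p => ?_)
    rw [Real.norm_eq_abs, abs_of_nonneg (hFnn p)]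
    simp only [hF, Pi.add_apply]
    nlinarith [sq_nonneg (u p.2 + u p.1), sq_nonneg (u p.2 - u p.1), (hγpos (p.1 - p.2)).le,
      sq_nonneg (u p.1), sq_nonneg (u p.2)]
  -- u vanishes on [2L, 3L]
  have hyzero : ∀ᵐ y : ℝ, y ∈ Icc (2*L) (3*L) → u y = 0 := by
    filter_upwards [hu0] with y hy hmem
    exact hy (fun h => by have := h.2; have := hmem.1; linarith)
  -- pointwise (in x) lower bound for the inner integral
  have hmain : ∀ᵐ x : ℝ, (Icc (-L) L).indicator (fun x => c * u x ^ 2) x ≤ ∫ y, F (x, y) := by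
    filter_upwards [hFint.prod_right_ae] with x hFx
    by_cases hx : x ∈ Icc (-L) L
    · rw [indicator_of_mem hx]
      have hgval : (∫ y in Icc (2*L) (3*L), γ (x - y)) = g x := by
        rw [MeasureTheory.integral_Icc_eq_integral_Ioc,
          ← intervalIntegral.integral_of_le (by linarith : 2*L ≤ 3*L),
          intervalIntegral.integral_comp_sub_left γ x]
      have heq : (∫ y in Icc (2*L) (3*L), F (x, y))
          = ∫ y in Icc (2*L) (3*L), u x ^ 2 * γ (x - y) := by
        refine MeasureTheory.setIntegral_congr_ae measurableSet_Icc ?_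
        filter_upwards [hyzero] with y hy hmem
        simp only [hF, hy hmem]
        ring
      calc c * u x ^ 2 ≤ g x * u x ^ 2 :=
            mul_le_mul_of_nonneg_right (hmin hx) (sq_nonneg _)
        _ = ∫ y in Icc (2*L) (3*L), u x ^ 2 * γ (x - y) := by
            rw [MeasureTheory.integral_const_mul, hgval]; ring
        _ = ∫ y in Icc (2*L) (3*L), F (x, y) := heq.symm
        _ ≤ ∫ y, F (x, y) :=
            setIntegral_le_integral hFx (Filter.Eventually.of_forall fun y => hFnn (x, y))
    · rw [indicator_of_notMem hx]
      exact integral_nonneg fun y => hFnn (x, y)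
  -- put everything together
  have hind : Integrable ((Icc (-L) L).indicator (fun x => c * u x ^ 2)) := by
    exact (husq.const_mul c).indicator measurableSet_Icc
  have h1 : (∫ x, (Icc (-L) L).indicator (fun x => c * u x ^ 2) x)
      ≤ ∫ x, ∫ y, F (x, y) :=
    integral_mono_ae hind hFint.integral_prod_left hmain
  have hlhs : (∫ x, (Icc (-L) L).indicator (fun x => c * u x ^ 2) x)
      = c * ∫ x in Icc (-L) L, u x ^ 2 := by
    rw [MeasureTheory.integral_indicator measurableSet_Icc, MeasureTheory.integral_const_mul]
  have hBD : BD γ u u = (1/2) * ∫ x, ∫ y, F (x, y) := by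
    unfold BD
    congr 1
    refine integral_congr_ae (Filter.Eventually.of_forall fun x => ?_)
    refine integral_congr_ae (Filter.Eventually.of_forall fun y => ?_)
    simp only [hF]; ring
  rw [hBD]
  rw [hlhs] at h1
  linarith
end

section
/- The null space of the nonlocal Dirichlet operator is trivial: if u ∈ V_D satisfies Ku(x) = 0 for a.e. x ∈ Ω, then u = 0 a.e. on ℝ. -/
open MeasureTheory Set Real

open scoped ENNReal

lemma aux_main (L : ℝ) (hL : 0 < L) (γ : ℝ → ℝ) (hγm : Measurable γ)
    (hγpos : ∀ z, 0 < γ z)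
    (hγL1 : Integrable γ) (hγL2 : MemLp γ 2)
    (u : ℝ → ℝ) (hum : Measurable u) (hu2 : MemLp u 2)
    (hu0 : ∀ᵐ x : ℝ, x ∉ Icc (-L) L → u x = 0)
    (hK : ∀ᵐ x ∂volume.restrict (Icc (-L) L), Knl γ u x = 0) :
    ∀ᵐ x : ℝ, u x = 0 := by
  set c : ℝ := ∫ z, γ z with hc_def
  have hc : 0 ≤ c := integral_nonneg fun z => (hγpos z).le
  -- pointwise integrability facts
  have mp : ∀ x : ℝ, MeasurePreserving (fun y => x - y) volume volume := fun x =>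
    Measure.measurePreserving_sub_left volume x
  have hγx1 : ∀ x : ℝ, Integrable (fun y => γ (x - y)) := fun x =>
    ((mp x).integrable_comp hγL1.aestronglyMeasurable).mpr hγL1
  have hγx2 : ∀ x : ℝ, MemLp (fun y => γ (x - y)) 2 := fun x =>
    hγL2.comp_measurePreserving (mp x)
  have hpqr : (1 : ℝ≥0∞) / 1 = 1 / 2 + 1 / 2 := by simp [ENNReal.inv_two_add_inv_two]
  have hmul : ∀ x : ℝ, Integrable (fun y => u y * γ (x - y)) := by
    intro x
    have := ((hγx2 x).smul hu2 : MemLp (u • fun y => γ (x - y)) 1)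
    exact memLp_one_iff_integrable.mp this
  have habs : ∀ x : ℝ, Integrable (fun y => |u y| * γ (x - y)) := by
    intro x
    have := ((hγx2 x).smul hu2.abs : MemLp (|u| • fun y => γ (x - y)) 1)
    exact memLp_one_iff_integrable.mp this
  -- Knl splits
  have hKnl : ∀ x : ℝ, Knl γ u x = (∫ y, u y * γ (x - y)) - u x * c := by
    intro x
    have h1 : (∫ y, (u y - u x) * γ (x - y)) =
        (∫ y, u y * γ (x - y)) - ∫ y, u x * γ (x - y) := by
      rw [← integral_sub (hmul x) ((hγx1 x).const_mul (u x))]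
      congr 1; funext y; ring
    have h2 : (∫ y, u x * γ (x - y)) = u x * c := by
      rw [integral_const_mul (u x) (fun y => γ (x - y)), hc_def, integral_sub_left_eq_self γ volume x]
    rw [Knl, h1, h2]
  -- the identity on the interval
  have hO : ∀ᵐ x : ℝ, x ∈ Icc (-L) L → (∫ y, u y * γ (x - y)) = u x * c := by
    filter_upwards [(ae_restrict_iff' measurableSet_Icc).mp hK] with x hx hxI
    have h := hx hxI
    rw [hKnl x] at h
    linarith
  -- ENNReal setup
  set V : ℝ → ℝ≥0∞ := fun y => ENNReal.ofReal |u y| with hV_def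
  set G : ℝ → ℝ≥0∞ := fun z => ENNReal.ofReal (γ z) with hG_def
  have hVm : Measurable V := ENNReal.measurable_ofReal.comp hum.abs
  have hGm : Measurable G := ENNReal.measurable_ofReal.comp hγm
  have hFm : Measurable (Function.uncurry fun x y => V y * G (x - y)) := by
    refine Measurable.mul (f := fun p : ℝ × ℝ => V p.2) (g := fun p : ℝ × ℝ => G (p.1 - p.2)) ?_ ?_
    · exact hVm.comp measurable_snd
    · exact hGm.comp (measurable_fst.sub measurable_snd)
  set H : ℝ → ℝ≥0∞ := fun x => ∫⁻ y, V y * G (x - y) with hH_def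
  have hHm : Measurable H := Measurable.lintegral_prod_right hFm
  have hHr : ∀ x : ℝ, H x = ENNReal.ofReal (∫ y, |u y| * γ (x - y)) := by
    intro x
    rw [ofReal_integral_eq_lintegral_ofReal (habs x)
      (Filter.Eventually.of_forall fun y => mul_nonneg (abs_nonneg _) (hγpos _).le)]
    simp_rw [ENNReal.ofReal_mul (abs_nonneg _)]
    rfl
  -- a.e. bound
  have hle : ∀ᵐ x : ℝ, ENNReal.ofReal (c * |u x|) ≤ H x := by
    filter_upwards [hO, hu0] with x hx hx0
    by_cases hxI : x ∈ Icc (-L) L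
    · rw [hHr x]
      apply ENNReal.ofReal_le_ofReal
      have h1 : c * |u x| = |u x * c| := by rw [abs_mul, abs_of_nonneg hc]; ring
      rw [h1, ← hx hxI]
      have hb := norm_integral_le_integral_norm (μ := volume) (fun y => u y * γ (x - y))
      simp only [Real.norm_eq_abs, abs_mul] at hb
      have heqi : (∫ y, |u y| * |γ (x - y)|) = ∫ y, |u y| * γ (x - y) := by
        congr 1; funext y; rw [abs_of_nonneg (hγpos _).le]
      rw [heqi] at hb
      exact hb
    · simp [hx0 hxI]
  -- computing the lintegrals
  have hintf : (∫⁻ x, ENNReal.ofReal (c * |u x|)) = ENNReal.ofReal c * ∫⁻ x, V x := by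
    simp_rw [ENNReal.ofReal_mul hc]
    exact lintegral_const_mul _ hVm
  have hCγ : (∫⁻ z, G z) = ENNReal.ofReal c :=
    (ofReal_integral_eq_lintegral_ofReal hγL1
      (Filter.Eventually.of_forall fun z => (hγpos z).le)).symm
  have hintH : (∫⁻ x, H x) = ENNReal.ofReal c * ∫⁻ x, V x := by
    rw [show (∫⁻ x, H x) = ∫⁻ x, ∫⁻ y, V y * G (x - y) from rfl]
    rw [lintegral_lintegral_swap hFm.aemeasurable]
    have hinner : ∀ y : ℝ, (∫⁻ x, V y * G (x - y)) = V y * ENNReal.ofReal c := by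
      intro y
      have hgm : Measurable fun x : ℝ => G (x - y) :=
        hGm.comp (measurable_id.sub measurable_const)
      rw [lintegral_const_mul _ hgm, lintegral_sub_right_eq_self G y, hCγ]
    simp_rw [hinner]
    rw [lintegral_mul_const _ hVm, mul_comm]
  -- finiteness
  have hu1 : Integrable u := by
    have heq : u =ᵐ[volume] (Icc (-L) L).indicator u := by
      filter_upwards [hu0] with x hx
      by_cases h : x ∈ Icc (-L) L
      · simp [indicator_of_mem h]
      · simp [indicator_of_notMem h, hx h]
    haveI : IsFiniteMeasure (volume.restrict (Icc (-L) L)) := by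
      constructor
      rw [Measure.restrict_apply_univ, Real.volume_Icc]
      exact ENNReal.ofReal_lt_top
    have hio : IntegrableOn u (Icc (-L) L) := (hu2.restrict _).integrable (by norm_num)
    exact ((integrable_indicator_iff measurableSet_Icc).mpr hio).congr heq.symm
  have hVfin : (∫⁻ x, V x) ≠ ∞ := hu1.abs.lintegral_lt_top.ne
  have hffin : (∫⁻ x, ENNReal.ofReal (c * |u x|)) ≠ ∞ := by
    rw [hintf]; exact ENNReal.mul_ne_top ENNReal.ofReal_ne_top hVfin
  have hmeasf : Measurable fun x => ENNReal.ofReal (c * |u x|) :=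
    ENNReal.measurable_ofReal.comp (measurable_const.mul hum.abs)
  have hsub : (∫⁻ x, (H x - ENNReal.ofReal (c * |u x|))) = 0 := by
    rw [lintegral_sub hmeasf hffin hle, hintH, hintf, tsub_self]
  have hge : ∀ᵐ x : ℝ, H x ≤ ENNReal.ofReal (c * |u x|) := by
    filter_upwards [(lintegral_eq_zero_iff (hHm.sub hmeasf)).mp hsub] with x hx
    exact tsub_eq_zero_iff_le.mp hx
  -- find a point outside the interval
  set P : ℝ → Prop := fun x => H x ≤ ENNReal.ofReal (c * |u x|) ∧ (x ∉ Icc (-L) L → u x = 0)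
    with hP_def
  have hSnull : volume {x : ℝ | ¬ P x} = 0 := by
    have hP : ∀ᵐ x : ℝ, P x := hge.and hu0
    exact ae_iff.mp hP
  have hcompl : volume ((Icc (-L) L)ᶜ) ≠ 0 := by
    intro h0
    have hsub2 : Ioi L ⊆ (Icc (-L) L)ᶜ := fun x hx hx2 => absurd hx2.2 (not_le.mpr hx)
    have := measure_mono_null hsub2 h0
    rw [Real.volume_Ioi] at this
    exact ENNReal.top_ne_zero this
  have hne : ((Icc (-L) L)ᶜ \ {x : ℝ | ¬ P x}).Nonempty := by
    apply nonempty_of_measure_ne_zero (μ := volume)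
    rw [measure_diff_null hSnull]
    exact hcompl
  obtain ⟨x₀, hx₀c, hx₀P⟩ := hne
  have hPx₀ : P x₀ := not_not.mp hx₀P
  have hux₀ : u x₀ = 0 := hPx₀.2 hx₀c
  have hH0 : H x₀ = 0 := by
    have := hPx₀.1
    rw [hux₀] at this
    simpa using this
  have hmeas0 : Measurable fun y => V y * G (x₀ - y) :=
    hVm.mul (hGm.comp (measurable_const.sub measurable_id))
  have hae := (lintegral_eq_zero_iff hmeas0).mp hH0
  filter_upwards [hae] with y hy
  have hy' : V y * G (x₀ - y) = 0 := hy
  have hGne : G (x₀ - y) ≠ 0 := by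
    simp only [hG_def, ne_eq, ENNReal.ofReal_eq_zero, not_le]
    exact hγpos _
  have hV0 : V y = 0 := by
    rcases mul_eq_zero.mp hy' with h | h
    · exact h
    · exact absurd h hGne
  simpa [hV_def, ENNReal.ofReal_eq_zero, abs_nonpos_iff] using hV0

/-- Triviality of the null space of `K` on `V_D`: if `u ∈ V_D` and `Ku = 0` a.e. on `Ω`,
then `u = 0` a.e. on `ℝ`. -/
theorem K_nullspace_trivial (L : ℝ) (hL : 0 < L) (γ : ℝ → ℝ)
    (hγeven : ∀ z, γ (-z) = γ z) (hγpos : ∀ z, 0 < γ z)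
    (hγL1 : Integrable γ) (hγL2 : MemLp γ 2)
    (hγmom : Integrable (fun z => z ^ 2 * γ z))
    (u : ℝ → ℝ) (hu : MemVD L u)
    (hK : ∀ᵐ x ∂volume.restrict (Icc (-L) L), Knl γ u x = 0) :
    ∀ᵐ x : ℝ, u x = 0 := by
  obtain ⟨hu2, hu0⟩ := hu
  set u' : ℝ → ℝ := hu2.1.mk u with hu'_def
  have hu'm : Measurable u' := hu2.1.stronglyMeasurable_mk.measurable
  have huu' : u =ᵐ[volume] u' := hu2.1.ae_eq_mk
  set γ₀ : ℝ → ℝ := hγL1.1.mk γ with hγ₀_def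
  have hγ₀m : Measurable γ₀ := hγL1.1.stronglyMeasurable_mk.measurable
  have hγγ₀ : γ =ᵐ[volume] γ₀ := hγL1.1.ae_eq_mk
  set γ' : ℝ → ℝ := fun z => if 0 < γ₀ z then γ₀ z else 1 with hγ'_def
  have hγ'm : Measurable γ' :=
    Measurable.ite (measurableSet_lt measurable_const hγ₀m) hγ₀m measurable_const
  have hγ'pos : ∀ z, 0 < γ' z := by
    intro z
    by_cases h : 0 < γ₀ z <;> simp [hγ'_def, h]
  have hγγ' : γ =ᵐ[volume] γ' := by
    filter_upwards [hγγ₀] with z hz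
    have hp : 0 < γ₀ z := hz ▸ hγpos z
    simp only [hγ'_def, if_pos hp]
    exact hz
  have hKnl_eq : ∀ᵐ x : ℝ, Knl γ' u' x = Knl γ u x := by
    filter_upwards [huu'] with x hx
    apply integral_congr_ae
    have h1 : (γ ∘ fun y => x - y) =ᵐ[volume] (γ' ∘ fun y => x - y) :=
      (Measure.measurePreserving_sub_left volume x).quasiMeasurePreserving.ae_eq hγγ'
    filter_upwards [huu', h1] with y hy hy2
    simp only [Function.comp] at hy2
    rw [← hx, ← hy, ← hy2]
  have hK' : ∀ᵐ x ∂volume.restrict (Icc (-L) L), Knl γ' u' x = 0 := by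
    filter_upwards [hK, ae_restrict_of_ae hKnl_eq] with x h1 h2
    rw [h2, h1]
  have hu'0 : ∀ᵐ x : ℝ, x ∉ Icc (-L) L → u' x = 0 := by
    filter_upwards [hu0, huu'] with x h1 h2 hx
    rw [← h2]
    exact h1 hx
  have hmain := aux_main L hL γ' hγ'm hγ'pos (hγL1.congr hγγ') (hγL2.ae_eq hγγ')
      u' hu'm (hu2.ae_eq huu') hu'0 hK'
  filter_upwards [hmain, huu'] with x h1 h2
  rw [h2, h1]
end

section
/- There exists a constant c > 0 such that ‖Ku‖_{L²(Ω)} ≤ c (B_D[u, u])^{1/2} for all u ∈ V_D; in particular, if a sequence (u_n) in V_D satisfies B_D[u_n, u_n] → 0, then Ku_n → 0 in L²(Ω). -/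
open MeasureTheory Set Real

/-- Key quantitative bound: for any `u ∈ L²(ℝ)` and any set `s`,
`‖Ku‖_{L²(s)} ≤ √(2‖γ‖₁) √(B_D[u,u])`. -/
private lemma knl_key_bound (γ : ℝ → ℝ) (hγpos : ∀ z, 0 < γ z) (hγL1 : Integrable γ)
    {u : ℝ → ℝ} (hu : MemLp u 2) (s : Set ℝ) :
    l2normOn s (Knl γ u) ≤ Real.sqrt (2 * ∫ z, γ z) * Real.sqrt (BD γ u u) := by
  set C : ℝ := ∫ z, γ z with hCdef
  have hγ0 : ∀ z, 0 ≤ γ z := fun z => (hγpos z).le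
  have hC0 : 0 ≤ C := integral_nonneg hγ0
  have huasm : AEStronglyMeasurable u volume := hu.aestronglyMeasurable
  have hu2 : Integrable (fun x => u x ^ 2) volume :=
    (memLp_two_iff_integrable_sq huasm).mp hu
  -- measurability on the product space
  have hγp : AEStronglyMeasurable (fun p : ℝ × ℝ => γ (p.1 - p.2))
      ((volume : Measure ℝ).prod volume) :=
    hγL1.aestronglyMeasurable.comp_quasiMeasurePreserving
      (MeasureTheory.quasiMeasurePreserving_sub _ _)
  have hu1p : AEStronglyMeasurable (fun p : ℝ × ℝ => u p.1)
      ((volume : Measure ℝ).prod volume) :=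
    huasm.comp_quasiMeasurePreserving MeasureTheory.Measure.quasiMeasurePreserving_fst
  have hu2p : AEStronglyMeasurable (fun p : ℝ × ℝ => u p.2)
      ((volume : Measure ℝ).prod volume) :=
    huasm.comp_quasiMeasurePreserving MeasureTheory.Measure.quasiMeasurePreserving_snd
  have hdiffp := hu2p.sub hu1p
  have hdasm : AEStronglyMeasurable (fun p : ℝ × ℝ => (u p.2 - u p.1) ^ 2 * γ (p.1 - p.2))
      ((volume : Measure ℝ).prod volume) := by
    have := (hdiffp.mul hdiffp).mul hγp
    simp only [pow_two]; exact this
  -- integrability of the dominating functions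
  have g1 : Integrable (fun p : ℝ × ℝ => u p.1 ^ 2 * γ (p.1 - p.2))
      ((volume : Measure ℝ).prod volume) := by
    have hasm : AEStronglyMeasurable (fun p : ℝ × ℝ => u p.1 ^ 2 * γ (p.1 - p.2))
        ((volume : Measure ℝ).prod volume) := by
      have := (hu1p.mul hu1p).mul hγp
      simp only [pow_two]; exact this
    rw [integrable_prod_iff hasm]
    constructor
    · exact Filter.Eventually.of_forall fun x => by
        simpa using (hγL1.comp_sub_left x).const_mul (u x ^ 2)
    · have heq : (fun x => ∫ y, ‖u x ^ 2 * γ (x - y)‖) = fun x => u x ^ 2 * C := by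
        funext x
        have hn : ∀ y : ℝ, ‖u x ^ 2 * γ (x - y)‖ = u x ^ 2 * γ (x - y) := fun y => by
          rw [Real.norm_eq_abs, abs_of_nonneg (mul_nonneg (sq_nonneg _) (hγ0 _))]
        simp_rw [hn]
        rw [MeasureTheory.integral_const_mul,
          MeasureTheory.integral_sub_left_eq_self γ volume x]
      rw [heq]
      exact hu2.mul_const C
  have g2 : Integrable (fun p : ℝ × ℝ => u p.2 ^ 2 * γ (p.1 - p.2))
      ((volume : Measure ℝ).prod volume) := by
    have hasm : AEStronglyMeasurable (fun p : ℝ × ℝ => u p.2 ^ 2 * γ (p.1 - p.2))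
        ((volume : Measure ℝ).prod volume) := by
      have := (hu2p.mul hu2p).mul hγp
      simp only [pow_two]; exact this
    rw [integrable_prod_iff' hasm]
    constructor
    · exact Filter.Eventually.of_forall fun y => by
        simpa using (hγL1.comp_sub_right y).const_mul (u y ^ 2)
    · have heq : (fun y => ∫ x, ‖u y ^ 2 * γ (x - y)‖) = fun y => u y ^ 2 * C := by
        funext y
        have hn : ∀ x : ℝ, ‖u y ^ 2 * γ (x - y)‖ = u y ^ 2 * γ (x - y) := fun x => by
          rw [Real.norm_eq_abs, abs_of_nonneg (mul_nonneg (sq_nonneg _) (hγ0 _))]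
        simp_rw [hn]
        rw [MeasureTheory.integral_const_mul,
          MeasureTheory.integral_sub_right_eq_self γ y]
      rw [heq]
      exact hu2.mul_const C
  -- integrability of the full symmetric integrand
  have hd : Integrable (fun p : ℝ × ℝ => (u p.2 - u p.1) ^ 2 * γ (p.1 - p.2))
      ((volume : Measure ℝ).prod volume) := by
    refine Integrable.mono' ((g2.const_mul 2).add (g1.const_mul 2)) hdasm
      (Filter.Eventually.of_forall fun p => ?_)
    rw [Real.norm_eq_abs, abs_of_nonneg (mul_nonneg (sq_nonneg _) (hγ0 _))]
    have h1 : (u p.2 - u p.1) ^ 2 ≤ 2 * u p.2 ^ 2 + 2 * u p.1 ^ 2 := by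
      nlinarith [sq_nonneg (u p.2 + u p.1)]
    calc (u p.2 - u p.1) ^ 2 * γ (p.1 - p.2)
        ≤ (2 * u p.2 ^ 2 + 2 * u p.1 ^ 2) * γ (p.1 - p.2) :=
          mul_le_mul_of_nonneg_right h1 (hγ0 _)
      _ = 2 * (u p.2 ^ 2 * γ (p.1 - p.2)) + 2 * (u p.1 ^ 2 * γ (p.1 - p.2)) := by ring
  set h : ℝ → ℝ := fun x => ∫ y, (u y - u x) ^ 2 * γ (x - y) with hhdef
  have hh_int : Integrable h volume := hd.integral_prod_left
  have hh0 : ∀ x, 0 ≤ h x := fun x =>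
    integral_nonneg fun y => mul_nonneg (sq_nonneg _) (hγ0 _)
  have hBD2 : ∫ x, h x = 2 * BD γ u u := by
    have hinner : ∀ x : ℝ, (∫ y, (u y - u x) * γ (x - y) * (u y - u x)) = h x := fun x => by
      rw [hhdef]
      exact integral_congr_ae (Filter.Eventually.of_forall fun y => by ring)
    unfold BD
    rw [integral_congr_ae (Filter.Eventually.of_forall hinner)]
    ring
  -- pointwise Cauchy–Schwarz
  have hCS : ∀ᵐ x : ℝ, Knl γ u x ^ 2 ≤ C * h x := by
    filter_upwards [hd.prod_right_ae] with x hx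
    set f : ℝ → ℝ := fun y => (u y - u x) * Real.sqrt (γ (x - y)) with hfdef
    set g : ℝ → ℝ := fun y => Real.sqrt (γ (x - y)) with hgdef
    have hgasm : AEStronglyMeasurable g volume :=
      Real.continuous_sqrt.comp_aestronglyMeasurable (hγL1.comp_sub_left x).aestronglyMeasurable
    have hfasm : AEStronglyMeasurable f volume :=
      (huasm.sub aestronglyMeasurable_const).mul hgasm
    have hfsq : (fun y => f y ^ 2) = fun y => (u y - u x) ^ 2 * γ (x - y) := by
      funext y
      rw [hfdef]
      simp only
      rw [mul_pow, Real.sq_sqrt (hγ0 _)]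
    have hgsq : (fun y => g y ^ 2) = fun y => γ (x - y) := by
      funext y
      exact Real.sq_sqrt (hγ0 _)
    have hfL2 : MemLp f (ENNReal.ofReal (2:ℝ)) volume := by
      rw [show ENNReal.ofReal (2:ℝ) = 2 by norm_num]
      exact (memLp_two_iff_integrable_sq hfasm).mpr (by rw [hfsq]; exact hx)
    have hgL2 : MemLp g (ENNReal.ofReal (2:ℝ)) volume := by
      rw [show ENNReal.ofReal (2:ℝ) = 2 by norm_num]
      exact (memLp_two_iff_integrable_sq hgasm).mpr (by rw [hgsq]; exact hγL1.comp_sub_left x)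
    have hH := MeasureTheory.integral_mul_norm_le_Lp_mul_Lq (μ := volume)
        (p := 2) (q := 2) Real.HolderConjugate.two_two hfL2 hgL2
    have habs : |Knl γ u x| ≤ ∫ y, ‖f y‖ * ‖g y‖ := by
      have hn : ∀ y : ℝ, ‖f y‖ * ‖g y‖ = ‖(u y - u x) * γ (x - y)‖ := fun y => by
        simp only [hfdef, hgdef, Real.norm_eq_abs, abs_mul]
        rw [abs_of_nonneg (Real.sqrt_nonneg _), abs_of_nonneg (hγ0 _), mul_assoc,
          Real.mul_self_sqrt (hγ0 _)]
      calc |Knl γ u x| ≤ ∫ y, ‖(u y - u x) * γ (x - y)‖ := by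
            rw [← Real.norm_eq_abs]
            exact norm_integral_le_integral_norm _
        _ = ∫ y, ‖f y‖ * ‖g y‖ := by simp_rw [hn]
    have hnormpow : ∀ a : ℝ, ‖a‖ ^ (2:ℝ) = a ^ 2 := fun a => by
      rw [show (2:ℝ) = ((2:ℕ):ℝ) by norm_num, Real.rpow_natCast, Real.norm_eq_abs, sq_abs]
    have hInt1 : ∫ y, ‖f y‖ ^ (2:ℝ) = h x := by
      simp_rw [hnormpow]
      rw [hhdef]
      simp only
      exact integral_congr_ae (Filter.Eventually.of_forall fun y => congrFun hfsq y)
    have hInt2 : ∫ y, ‖g y‖ ^ (2:ℝ) = C := by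
      simp_rw [hnormpow]
      have : ∫ y, g y ^ 2 = ∫ y, γ (x - y) :=
        integral_congr_ae (Filter.Eventually.of_forall fun y => congrFun hgsq y)
      rw [this, MeasureTheory.integral_sub_left_eq_self γ volume x]
    rw [hInt1, hInt2] at hH
    rw [← Real.sqrt_eq_rpow, ← Real.sqrt_eq_rpow] at hH
    have hfinal : |Knl γ u x| ≤ Real.sqrt (h x) * Real.sqrt C := habs.trans hH
    calc Knl γ u x ^ 2 = |Knl γ u x| ^ 2 := (sq_abs _).symm
      _ ≤ (Real.sqrt (h x) * Real.sqrt C) ^ 2 := pow_le_pow_left₀ (abs_nonneg _) hfinal 2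
      _ = h x * C := by rw [mul_pow, Real.sq_sqrt (hh0 x), Real.sq_sqrt hC0]
      _ = C * h x := mul_comm _ _
  -- measurability of Knl
  have hKasm : AEStronglyMeasurable (Knl γ u) volume := by
    have hasm : AEStronglyMeasurable (fun p : ℝ × ℝ => (u p.2 - u p.1) * γ (p.1 - p.2))
        ((volume : Measure ℝ).prod volume) := hdiffp.mul hγp
    exact hasm.integral_prod_right'
  have hK2asm : AEStronglyMeasurable (fun x => Knl γ u x ^ 2) volume := by
    simp only [pow_two]; exact hKasm.mul hKasm
  have hK2int : IntegrableOn (fun x => Knl γ u x ^ 2) s volume := by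
    refine Integrable.mono' ((hh_int.const_mul C).restrict) hK2asm.restrict
      (ae_restrict_of_ae ?_)
    filter_upwards [hCS] with x hx
    rwa [Real.norm_eq_abs, abs_of_nonneg (sq_nonneg _)]
  have step1 : ∫ x in s, Knl γ u x ^ 2 ≤ ∫ x in s, C * h x :=
    integral_mono_ae hK2int ((hh_int.const_mul C).restrict) (ae_restrict_of_ae hCS)
  have step2 : ∫ x in s, C * h x ≤ 2 * C * BD γ u u := by
    rw [MeasureTheory.integral_const_mul]
    have hle := setIntegral_le_integral (s := s) hh_int (Filter.Eventually.of_forall hh0)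
    calc C * ∫ x in s, h x ≤ C * ∫ x, h x := mul_le_mul_of_nonneg_left hle hC0
      _ = 2 * C * BD γ u u := by rw [hBD2]; ring
  have final : ∫ x in s, Knl γ u x ^ 2 ≤ 2 * C * BD γ u u := step1.trans step2
  unfold l2normOn
  calc Real.sqrt (∫ x in s, Knl γ u x ^ 2) ≤ Real.sqrt (2 * C * BD γ u u) :=
        Real.sqrt_le_sqrt final
    _ = Real.sqrt (2 * C) * Real.sqrt (BD γ u u) := Real.sqrt_mul (by positivity) _

open Filter in
/-- There is `c > 0` with `‖Ku‖_{L²(Ω)} ≤ c (B_D[u, u])^{1/2}` for all `u ∈ V_D`;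
in particular, if `B_D[u_n, u_n] → 0` for a sequence in `V_D`, then `Ku_n → 0` in `L²(Ω)`. -/
theorem K_controlled_by_BD (L : ℝ) (hL : 0 < L) (γ : ℝ → ℝ)
    (hγeven : ∀ z, γ (-z) = γ z) (hγpos : ∀ z, 0 < γ z)
    (hγL1 : Integrable γ) (hγL2 : MemLp γ 2)
    (hγmom : Integrable (fun z => z ^ 2 * γ z)) :
    ∃ c : ℝ, 0 < c ∧
      (∀ u : ℝ → ℝ, MemVD L u →
        l2normOn (Icc (-L) L) (Knl γ u) ≤ c * Real.sqrt (BD γ u u)) ∧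
      (∀ useq : ℕ → ℝ → ℝ, (∀ n, MemVD L (useq n)) →
        Tendsto (fun n => BD γ (useq n) (useq n)) atTop (nhds 0) →
        Tendsto (fun n => l2normOn (Icc (-L) L) (Knl γ (useq n))) atTop (nhds 0)) := by
  set C : ℝ := ∫ z, γ z with hCdef
  have hCpos : 0 < C := by
    rw [hCdef, integral_pos_iff_support_of_nonneg (fun z => (hγpos z).le) hγL1]
    have hsupp : Function.support γ = Set.univ :=
      Set.eq_univ_of_forall fun z => (hγpos z).ne'
    rw [hsupp]
    simp
  refine ⟨Real.sqrt (2 * C), Real.sqrt_pos.mpr (by positivity), ?_, ?_⟩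
  · intro u hu
    exact knl_key_bound γ hγpos hγL1 hu.1 _
  · intro useq hseq htend
    have hb : ∀ n, l2normOn (Icc (-L) L) (Knl γ (useq n)) ≤
        Real.sqrt (2 * C) * Real.sqrt (BD γ (useq n) (useq n)) := fun n =>
      knl_key_bound γ hγpos hγL1 (hseq n).1 _
    have htend2 : Tendsto (fun n => Real.sqrt (2 * C) * Real.sqrt (BD γ (useq n) (useq n)))
        atTop (nhds 0) := by
      have hs : Tendsto (fun n => Real.sqrt (BD γ (useq n) (useq n))) atTop
          (nhds (Real.sqrt 0)) := (Real.continuous_sqrt.tendsto 0).comp htend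
      rw [Real.sqrt_zero] at hs
      simpa using hs.const_mul (Real.sqrt (2 * C))
    exact tendsto_of_tendsto_of_tendsto_of_le_of_le tendsto_const_nhds htend2
      (fun n => Real.sqrt_nonneg _) hb
end

section
/- A priori L² bound for Galerkin-type solutions of the truncated nonlocal Gray–Scott system: let T > 0, let u, v : [0, T] → L²(Ω) be continuously differentiable curves, and let X ⊆ L²(Ω) be a linear subspace with u(t), v(t) ∈ X for all t. Assume that for every t ∈ [0, T] and every φ ∈ X: (u′(t), φ) + d_u B[u(t), φ] = (−σ(u(t))σ(v(t))² + f(1 − u(t)), φ) and (v′(t), φ) + d_v B[v(t), φ] = (σ(u(t))σ(v(t))² − (f + κ) v(t), φ), where σ(u(t)), σ(v(t)) denote pointwise compositions. Let ε > 0 be small enough that A := (1 − ε²)(f + κ) − ε² |d_v − d_u| > 0, and set B₀ := (1/ε²)(|d_v − d_u| + κ)(2L) + (f/ε²)(2L) and C₀ := (1/ε²)(|d_v − d_u| + κ). Then for all t ∈ [0, T]: ‖u(t)‖ + ‖v(t)‖ ≤ (3 + √(C₀/A)) (‖u(0)‖ + ‖v(0)‖) + √(B₀/A) + 2√(2L).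 -/
open MeasureTheory Set Real

/-- Lebesgue measure restricted to `Ω = [−L, L]`. -/
noncomputable def muOmega (L : ℝ) : Measure ℝ := volume.restrict (Icc (-L) L)

section helpers
variable {L : ℝ}

instance muOmega_finite (L : ℝ) : IsFiniteMeasure (muOmega L) := by
  unfold muOmega
  exact ⟨by simp [Real.volume_Icc]⟩

lemma muOmega_univ (L : ℝ) : (muOmega L) Set.univ = ENNReal.ofReal (2 * L) := by
  rw [muOmega, Measure.restrict_apply_univ, Real.volume_Icc]; ring_nf

lemma integrable_Lp (f : Lp ℝ 2 (muOmega L)) : Integrable f (muOmega L) :=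
  (MeasureTheory.Lp.memLp f).integrable (by norm_num)

lemma integrable_mul (f g : Lp ℝ 2 (muOmega L)) :
    Integrable (fun x => f x * g x) (muOmega L) := by
  have := MeasureTheory.L2.integrable_inner (𝕜 := ℝ) f g
  simpa [RCLike.inner_apply, mul_comm] using this

lemma integral_mul_eq_inner (f g : Lp ℝ 2 (muOmega L)) :
    ∫ x, f x * g x ∂(muOmega L) = @inner ℝ _ _ f g := by
  rw [MeasureTheory.L2.inner_def]
  refine integral_congr_ae (Filter.Eventually.of_forall fun x => ?_)
  simp [RCLike.inner_apply, mul_comm]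

lemma integral_le_sqrt_mul_norm (hL : 0 < L) (f : Lp ℝ 2 (muOmega L)) :
    ∫ x, f x ∂(muOmega L) ≤ Real.sqrt (2 * L) * ‖f‖ := by
  have h1 : ∫ x, f x ∂(muOmega L)
      = @inner ℝ _ _ f (MeasureTheory.Lp.const 2 (muOmega L) (1:ℝ)) := by
    rw [MeasureTheory.L2.inner_def]
    refine integral_congr_ae ?_
    filter_upwards [MeasureTheory.Lp.coeFn_const 2 (muOmega L) (1:ℝ)] with x hx
    rw [RCLike.inner_apply, hx]
    simp [Function.const]
  have h2 : ‖MeasureTheory.Lp.const 2 (muOmega L) (1:ℝ)‖ = Real.sqrt (2 * L) := by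
    rw [MeasureTheory.Lp.norm_const' 2 (muOmega L) (1:ℝ) (by norm_num) (by norm_num)]
    rw [measureReal_def, muOmega_univ, ENNReal.toReal_ofReal (by positivity)]
    rw [Real.sqrt_eq_rpow]
    norm_num
  calc ∫ x, f x ∂(muOmega L) = _ := h1
    _ ≤ ‖f‖ * ‖MeasureTheory.Lp.const 2 (muOmega L) (1:ℝ)‖ := real_inner_le_norm _ _
    _ = Real.sqrt (2 * L) * ‖f‖ := by rw [h2]; ring

variable {σ : ℝ → ℝ} (hσc : Continuous σ) {M : ℝ} (hσb : ∀ z, |σ z| ≤ 2 * M)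

include hσc hσb in
lemma integrable_N_mul (a b φ : Lp ℝ 2 (muOmega L)) :
    Integrable (fun x => σ (a x) * σ (b x) ^ 2 * φ x) (muOmega L) := by
  refine Integrable.bdd_mul (c := 2 * M * (2 * M) ^ 2) (integrable_Lp φ) ?_ (Filter.Eventually.of_forall fun x => ?_)
  · exact (hσc.comp_aestronglyMeasurable (Lp.aestronglyMeasurable a)).mul
      ((hσc.comp_aestronglyMeasurable (Lp.aestronglyMeasurable b)).pow 2)
  · have hM0 : 0 ≤ 2 * M := (abs_nonneg _).trans (hσb 0)
    have h1 := hσb (a x); have h2 := hσb (b x)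
    have e : ‖σ (a x) * σ (b x) ^ 2‖ = |σ (a x)| * |σ (b x)| ^ 2 := by
      rw [Real.norm_eq_abs, abs_mul, abs_pow]
    rw [e]
    gcongr <;> exact abs_nonneg _

include hσc hσb in
lemma split_u (f : ℝ) (a b φ : Lp ℝ 2 (muOmega L)) :
    ∫ x, (-(σ (a x)) * (σ (b x)) ^ 2 + f * (1 - a x)) * φ x ∂(muOmega L)
      = -(∫ x, σ (a x) * σ (b x) ^ 2 * φ x ∂(muOmega L))
        + (f * (∫ x, φ x ∂(muOmega L)) - f * @inner ℝ _ _ a φ) := by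
  have e : ∀ x, (-(σ (a x)) * (σ (b x)) ^ 2 + f * (1 - a x)) * φ x
      = -(σ (a x) * σ (b x) ^ 2 * φ x) + (f * φ x - f * (a x * φ x)) := fun x => by ring
  have h1 : Integrable (fun x => -(σ (a x) * σ (b x) ^ 2 * φ x)) (muOmega L) :=
    (integrable_N_mul hσc hσb a b φ).neg
  have h2a : Integrable (fun x => f * φ x) (muOmega L) := (integrable_Lp φ).const_mul f
  have h2b : Integrable (fun x => f * (a x * φ x)) (muOmega L) :=
    (integrable_mul a φ).const_mul f
  have h2 : Integrable (fun x => f * φ x - f * (a x * φ x)) (muOmega L) := h2a.sub h2b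
  rw [integral_congr_ae (Filter.Eventually.of_forall e), integral_add h1 h2,
    integral_neg, integral_sub h2a h2b, integral_const_mul, integral_const_mul,
    integral_mul_eq_inner]

include hσc hσb in
lemma split_v (f' : ℝ) (a b φ : Lp ℝ 2 (muOmega L)) :
    ∫ x, (σ (a x) * (σ (b x)) ^ 2 - f' * b x) * φ x ∂(muOmega L)
      = (∫ x, σ (a x) * σ (b x) ^ 2 * φ x ∂(muOmega L)) - f' * @inner ℝ _ _ b φ := by
  have e : ∀ x, (σ (a x) * (σ (b x)) ^ 2 - f' * b x) * φ x
      = σ (a x) * σ (b x) ^ 2 * φ x - f' * (b x * φ x) := fun x => by ring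
  have h2b : Integrable (fun x => f' * (b x * φ x)) (muOmega L) :=
    (integrable_mul b φ).const_mul f'
  rw [integral_congr_ae (Filter.Eventually.of_forall e),
    integral_sub (integrable_N_mul hσc hσb a b φ) h2b, integral_const_mul,
    integral_mul_eq_inner]

lemma N_sign (hσsign : ∀ z, 0 ≤ σ z * z) (a b : Lp ℝ 2 (muOmega L)) :
    0 ≤ ∫ x, σ (a x) * σ (b x) ^ 2 * a x ∂(muOmega L) := by
  refine integral_nonneg fun x => ?_
  show (0:ℝ) ≤ _
  nlinarith [mul_nonneg (sq_nonneg (σ (b x))) (hσsign (a x))]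

end helpers

lemma gronwall_simple {T a b : ℝ} (ha : 0 < a) (hb : 0 ≤ b)
    {y y' : ℝ → ℝ} (hy0 : 0 ≤ y 0)
    (hy : ∀ t ∈ Icc (0:ℝ) T, HasDerivWithinAt y (y' t) (Icc 0 T) t)
    (hineq : ∀ t ∈ Icc (0:ℝ) T, y' t ≤ -a * y t + b) :
    ∀ t ∈ Icc (0:ℝ) T, y t ≤ y 0 + b / a := by
  set z : ℝ → ℝ := fun t => (y t - b / a) * Real.exp (a * t) with hz
  have hzd : ∀ t ∈ Icc (0:ℝ) T,
      HasDerivWithinAt z ((y' t + a * y t - b) * Real.exp (a * t)) (Icc 0 T) t := by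
    intro t ht
    have h1 : HasDerivWithinAt (fun s => y s - b / a) (y' t) (Icc 0 T) t :=
      (hy t ht).sub_const _
    have h2 : HasDerivWithinAt (fun s => Real.exp (a * s)) (a * Real.exp (a * t))
        (Icc 0 T) t := by
      have := (Real.hasDerivAt_exp (a * t)).comp t
        ((hasDerivAt_id t).const_mul a) |>.hasDerivWithinAt (s := Icc (0:ℝ) T)
      simpa [mul_comm, Function.comp_def] using this
    have := h1.mul h2
    refine this.congr_deriv ?_
    have hb : b / a * a = b := div_mul_cancel₀ b ha.ne'
    linear_combination (-Real.exp (a * t)) * hb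
  have hanti : AntitoneOn z (Icc 0 T) := by
    refine antitoneOn_of_hasDerivWithinAt_nonpos (convex_Icc 0 T)
      (fun t ht => ((hzd t ht).continuousWithinAt))
      (f' := fun t => (y' t + a * y t - b) * Real.exp (a * t))
      (fun t ht => (hzd t (interior_subset ht)).mono interior_subset) ?_
    intro t ht
    have ht' := interior_subset ht
    have := hineq t ht'
    have hexp : 0 < Real.exp (a * t) := Real.exp_pos _
    have h3 : y' t + a * y t - b ≤ 0 := by linarith
    have := mul_le_mul_of_nonneg_right h3 hexp.le
    simpa using this
  intro t ht
  have h0 : (0:ℝ) ∈ Icc (0:ℝ) T := ⟨le_refl _, ht.1.trans ht.2⟩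
  have := hanti h0 ht ht.1
  have hz0 : z 0 = y 0 - b / a := by simp [hz]
  have hzt : z t = (y t - b / a) * Real.exp (a * t) := rfl
  rw [hz0, hzt] at this
  have hexp1 : (1:ℝ) ≤ Real.exp (a * t) := by
    have h4 : 0 ≤ a * t := mul_nonneg ha.le ht.1
    calc (1:ℝ) = Real.exp 0 := by simp
      _ ≤ Real.exp (a * t) := Real.exp_le_exp.mpr h4
  have hba : 0 ≤ b / a := div_nonneg hb ha.le
  rcases le_or_gt (y t) (b / a) with h | h
  · linarith
  · nlinarith [Real.exp_pos (a * t)]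

lemma sqrt_add_le' {x y : ℝ} (hx : 0 ≤ x) (hy : 0 ≤ y) :
    Real.sqrt (x + y) ≤ Real.sqrt x + Real.sqrt y := by
  rw [show x + y = x + y by rfl]
  have h : x + y ≤ (Real.sqrt x + Real.sqrt y) ^ 2 := by
    have hxx := Real.sq_sqrt hx
    have hyy := Real.sq_sqrt hy
    nlinarith [mul_nonneg (Real.sqrt_nonneg x) (Real.sqrt_nonneg y)]
  calc Real.sqrt (x + y) ≤ Real.sqrt ((Real.sqrt x + Real.sqrt y) ^ 2) :=
        Real.sqrt_le_sqrt h
    _ = Real.sqrt x + Real.sqrt y := by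
        rw [Real.sqrt_sq (by positivity)]


set_option maxHeartbeats 2000000 in
/-- A priori `L²` bound for Galerkin-type solutions of the truncated nonlocal
Gray–Scott system:
`‖u(t)‖ + ‖v(t)‖ ≤ (3 + √(C₀/A)) (‖u(0)‖ + ‖v(0)‖) + √(B₀/A) + 2√(2L)` on `[0, T]`. -/
theorem apriori_L2_bound (L : ℝ) (hL : 0 < L) (M : ℝ) (hM : 0 < M)
    (σ : ℝ → ℝ) (hσ : ContDiff ℝ 1 σ)
    (hσ'0 : ∀ z, 0 ≤ deriv σ z) (hσ'1 : ∀ z, deriv σ z ≤ 1)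
    (hσb : ∀ z, |σ z| ≤ 2 * M) (hσsign : ∀ z, 0 ≤ σ z * z)
    (B : Lp ℝ 2 (muOmega L) →ₗ[ℝ] Lp ℝ 2 (muOmega L) →ₗ[ℝ] ℝ)
    (hBpos : ∀ w, 0 ≤ B w w) (hBbdd : ∀ w ψ, |B w ψ| ≤ ‖w‖ * ‖ψ‖)
    (du dv f κ : ℝ) (hdu : 0 ≤ du) (hdv : 0 ≤ dv) (hf : 0 < f) (hκ : 0 < κ)
    (T : ℝ) (hT : 0 < T)
    (X : Submodule ℝ (Lp ℝ 2 (muOmega L)))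
    (u u' v v' : ℝ → Lp ℝ 2 (muOmega L))
    (hu'cont : ContinuousOn u' (Icc 0 T)) (hv'cont : ContinuousOn v' (Icc 0 T))
    (hud : ∀ t ∈ Icc (0:ℝ) T, HasDerivWithinAt u (u' t) (Icc 0 T) t)
    (hvd : ∀ t ∈ Icc (0:ℝ) T, HasDerivWithinAt v (v' t) (Icc 0 T) t)
    (hmem : ∀ t ∈ Icc (0:ℝ) T, u t ∈ X ∧ v t ∈ X)
    (hequ : ∀ t ∈ Icc (0:ℝ) T, ∀ φ ∈ X,
      (∫ x, (u' t) x * φ x ∂muOmega L) + du * B (u t) φ =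
        ∫ x, (-(σ ((u t) x)) * (σ ((v t) x)) ^ 2 + f * (1 - (u t) x)) * φ x
          ∂muOmega L)
    (heqv : ∀ t ∈ Icc (0:ℝ) T, ∀ φ ∈ X,
      (∫ x, (v' t) x * φ x ∂muOmega L) + dv * B (v t) φ =
        ∫ x, (σ ((u t) x) * (σ ((v t) x)) ^ 2 - (f + κ) * (v t) x) * φ x
          ∂muOmega L)
    (ε A B₀ C₀ : ℝ) (hε : 0 < ε)
    (hA : A = (1 - ε ^ 2) * (f + κ) - ε ^ 2 * |dv - du|) (hApos : 0 < A)
    (hB₀ : B₀ = (1 / ε ^ 2) * (|dv - du| + κ) * (2 * L) + (f / ε ^ 2) * (2 * L))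
    (hC₀ : C₀ = (1 / ε ^ 2) * (|dv - du| + κ)) :
    ∀ t ∈ Icc (0:ℝ) T,
      ‖u t‖ + ‖v t‖ ≤
        (3 + Real.sqrt (C₀ / A)) * (‖u 0‖ + ‖v 0‖) + Real.sqrt (B₀ / A) +
          2 * Real.sqrt (2 * L) := by
  have hσcont : Continuous σ := hσ.continuous
  have h2L : (0:ℝ) ≤ 2 * L := by linarith
  have hDκ : (0:ℝ) ≤ |dv - du| + κ := add_nonneg (abs_nonneg _) hκ.le
  have hεne : ε ≠ 0 := ne_of_gt hε
  -- Part I : bound on ‖u t‖²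
  have huineq : ∀ t ∈ Icc (0:ℝ) T,
      (fun s => 2 * @inner ℝ _ _ (u' s) (u s)) t
        ≤ -f * @inner ℝ _ _ (u t) (u t) + 2 * L * f := by
    intro t ht
    have heq := hequ t ht (u t) (hmem t ht).1
    rw [integral_mul_eq_inner, split_u hσcont hσb f (u t) (v t) (u t)] at heq
    have hB : 0 ≤ du * B (u t) (u t) := mul_nonneg hdu (hBpos _)
    have hN := N_sign hσsign (u t) (v t)
    have hint : f * (∫ x, (u t) x ∂(muOmega L)) ≤ f * (Real.sqrt (2*L) * ‖u t‖) :=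
      mul_le_mul_of_nonneg_left (integral_le_sqrt_mul_norm hL (u t)) hf.le
    have hnorm : @inner ℝ _ _ (u t) (u t) = ‖u t‖ ^ 2 := real_inner_self_eq_norm_sq _
    have hs : Real.sqrt (2*L) ^ 2 = 2 * L := Real.sq_sqrt h2L
    show 2 * @inner ℝ _ _ (u' t) (u t) ≤ _
    nlinarith [mul_nonneg hf.le (sq_nonneg (Real.sqrt (2*L) - ‖u t‖))]
  have huder : ∀ t ∈ Icc (0:ℝ) T,
      HasDerivWithinAt (fun s => @inner ℝ _ _ (u s) (u s))
        ((fun s => 2 * @inner ℝ _ _ (u' s) (u s)) t) (Icc 0 T) t := by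
    intro t ht
    have h := HasDerivWithinAt.inner ℝ (hud t ht) (hud t ht)
    show HasDerivWithinAt _ (2 * @inner ℝ _ _ (u' t) (u t)) _ _
    exact h.congr_deriv (by linarith [real_inner_comm (u t) (u' t)])
  have hubound : ∀ t ∈ Icc (0:ℝ) T, ‖u t‖ ^ 2 ≤ ‖u 0‖ ^ 2 + 2 * L := by
    have hgr := gronwall_simple (y := fun s => @inner ℝ _ _ (u s) (u s))
      (y' := fun s => 2 * @inner ℝ _ _ (u' s) (u s)) hf
      (by nlinarith : (0:ℝ) ≤ 2 * L * f) real_inner_self_nonneg huder huineq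
    intro t ht
    have h2 : @inner ℝ _ _ (u t) (u t) ≤ @inner ℝ _ _ (u 0) (u 0) + 2 * L * f / f :=
      hgr t ht
    rw [real_inner_self_eq_norm_sq, real_inner_self_eq_norm_sq] at h2
    have hdivf : 2 * L * f / f = 2 * L := by field_simp
    linarith
  -- Part II : bound on ‖u t + v t‖²
  have hwX : ∀ t ∈ Icc (0:ℝ) T, u t + v t ∈ X :=
    fun t ht => X.add_mem (hmem t ht).1 (hmem t ht).2
  have hC₀0 : 0 ≤ C₀ := by
    rw [hC₀]; exact mul_nonneg (by positivity) hDκ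
  have hB₀0 : 0 ≤ B₀ := by
    rw [hB₀]
    exact add_nonneg (mul_nonneg (mul_nonneg (by positivity) hDκ) h2L)
      (mul_nonneg (by positivity) h2L)
  have hK0 : (0:ℝ) ≤ (B₀ + C₀ * ‖u 0‖ ^ 2) / 2 := by positivity
  have hwineq : ∀ t ∈ Icc (0:ℝ) T,
      (fun s => 2 * @inner ℝ _ _ (u' s + v' s) (u s + v s)) t
        ≤ -(2 * A) * @inner ℝ _ _ (u t + v t) (u t + v t)
          + (B₀ + C₀ * ‖u 0‖ ^ 2) / 2 := by
    intro t ht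
    have hXw := hwX t ht
    have heqU := hequ t ht (u t + v t) hXw
    have heqV := heqv t ht (u t + v t) hXw
    rw [integral_mul_eq_inner, split_u hσcont hσb f (u t) (v t) (u t + v t)] at heqU
    rw [integral_mul_eq_inner, split_v hσcont hσb (f + κ) (u t) (v t) (u t + v t)] at heqV
    show 2 * @inner ℝ _ _ (u' t + v' t) (u t + v t) ≤ _
    set wt := u t + v t with hwt
    have hvw : v t = wt - u t := by rw [hwt]; abel
    have hBv : B (v t) wt = B wt wt - B (u t) wt := by
      rw [hvw, map_sub]; simp
    have hiv : @inner ℝ _ _ (v t) wt = @inner ℝ _ _ wt wt - @inner ℝ _ _ (u t) wt := by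
      rw [hvw, inner_sub_left]
    have hBw : 0 ≤ dv * B wt wt := mul_nonneg hdv (hBpos _)
    have hBu : (dv - du) * B (u t) wt ≤ |dv - du| * (‖u t‖ * ‖wt‖) := by
      calc (dv - du) * B (u t) wt ≤ |(dv - du) * B (u t) wt| := le_abs_self _
        _ = |dv - du| * |B (u t) wt| := abs_mul _ _
        _ ≤ |dv - du| * (‖u t‖ * ‖wt‖) :=
            mul_le_mul_of_nonneg_left (hBbdd _ _) (abs_nonneg _)
    have hI1 : f * (∫ x, wt x ∂(muOmega L)) ≤ f * (Real.sqrt (2*L) * ‖wt‖) :=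
      mul_le_mul_of_nonneg_left (integral_le_sqrt_mul_norm hL wt) hf.le
    have hκu : κ * @inner ℝ _ _ (u t) wt ≤ κ * (‖u t‖ * ‖wt‖) :=
      mul_le_mul_of_nonneg_left (real_inner_le_norm _ _) hκ.le
    have hww : @inner ℝ _ _ wt wt = ‖wt‖ ^ 2 := real_inner_self_eq_norm_sq _
    have hinnersum : @inner ℝ _ _ (u' t + v' t) wt
        = @inner ℝ _ _ (u' t) wt + @inner ℝ _ _ (v' t) wt := inner_add_left _ _ _
    rw [hBv, hiv, hww] at heqV
    have hP : @inner ℝ _ _ (u' t + v' t) wt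
        ≤ -(f + κ) * ‖wt‖ ^ 2 + f * (Real.sqrt (2*L) * ‖wt‖)
          + (|dv - du| + κ) * (‖u t‖ * ‖wt‖) := by
      rw [hinnersum]
      linarith [heqU, heqV, hBw, hBu, hI1, hκu]
    have hs : Real.sqrt (2*L) ^ 2 = 2 * L := Real.sq_sqrt h2L
    have hnu2 : ‖u t‖ ^ 2 ≤ ‖u 0‖ ^ 2 + 2 * L := hubound t ht
    have hy1 : 4 * ε^2 * (Real.sqrt (2*L) * ‖wt‖)
        ≤ 4 * ε^4 * ‖wt‖^2 + Real.sqrt (2*L) ^ 2 := by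
      nlinarith [sq_nonneg (2 * ε^2 * ‖wt‖ - Real.sqrt (2*L))]
    have hy2 : 4 * ε^2 * (‖u t‖ * ‖wt‖) ≤ 4 * ε^4 * ‖wt‖^2 + ‖u t‖^2 := by
      nlinarith [sq_nonneg (2 * ε^2 * ‖wt‖ - ‖u t‖)]
    have hεB : ε^2 * B₀ = (|dv - du| + κ) * (2 * L) + f * (2 * L) := by
      rw [hB₀]; field_simp
    have hεC : ε^2 * C₀ = |dv - du| + κ := by
      rw [hC₀]; field_simp
    have hεC' : ε^2 * C₀ * ‖u 0‖^2 = (|dv - du| + κ) * ‖u 0‖^2 := by rw [hεC]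
    have hGm : (2 * ε^2) * (2 * @inner ℝ _ _ (u' t + v' t) wt)
        ≤ (2 * ε^2) * (-(2 * A) * @inner ℝ _ _ wt wt + (B₀ + C₀ * ‖u 0‖ ^ 2) / 2) := by
      rw [hww, hA]
      have m0 := mul_le_mul_of_nonneg_left hP (by positivity : (0:ℝ) ≤ 4 * ε^2)
      have m1 := mul_le_mul_of_nonneg_left hy1 hf.le
      have m2 := mul_le_mul_of_nonneg_left hy2 hDκ
      have m3 := mul_le_mul_of_nonneg_left hnu2 hDκ
      have hsf : f * Real.sqrt (2*L) ^ 2 = f * (2 * L) := by rw [hs]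
      linarith [m0, m1, m2, m3, hsf, hεB, hεC']
    exact le_of_mul_le_mul_left hGm (by positivity : (0:ℝ) < 2 * ε^2)
  have hwder : ∀ t ∈ Icc (0:ℝ) T,
      HasDerivWithinAt (fun s => @inner ℝ _ _ (u s + v s) (u s + v s))
        ((fun s => 2 * @inner ℝ _ _ (u' s + v' s) (u s + v s)) t) (Icc 0 T) t := by
    intro t ht
    have h := HasDerivWithinAt.inner ℝ ((hud t ht).add (hvd t ht)) ((hud t ht).add (hvd t ht))
    show HasDerivWithinAt _ (2 * @inner ℝ _ _ (u' t + v' t) (u t + v t)) _ _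
    exact h.congr_deriv (by simp only [Pi.add_apply]; linarith [real_inner_comm (u t + v t) (u' t + v' t)])
  have hwbound : ∀ t ∈ Icc (0:ℝ) T,
      ‖u t + v t‖ ^ 2 ≤ ‖u 0 + v 0‖ ^ 2 + (B₀ + C₀ * ‖u 0‖ ^ 2) / (4 * A) := by
    have hgr := gronwall_simple (y := fun s => @inner ℝ _ _ (u s + v s) (u s + v s))
      (y' := fun s => 2 * @inner ℝ _ _ (u' s + v' s) (u s + v s))
      (show (0:ℝ) < 2 * A by linarith) hK0
      real_inner_self_nonneg hwder hwineq
    intro t ht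
    have h2 : @inner ℝ _ _ (u t + v t) (u t + v t)
        ≤ @inner ℝ _ _ (u 0 + v 0) (u 0 + v 0) + (B₀ + C₀ * ‖u 0‖ ^ 2) / 2 / (2 * A) :=
      hgr t ht
    rw [real_inner_self_eq_norm_sq, real_inner_self_eq_norm_sq] at h2
    have hdd : (B₀ + C₀ * ‖u 0‖ ^ 2) / 2 / (2 * A) = (B₀ + C₀ * ‖u 0‖ ^ 2) / (4 * A) := by
      rw [div_div]; ring_nf
    linarith
  -- Part IV : assembly
  intro t ht
  have hu2 := hubound t ht
  have hw2 := hwbound t ht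
  have hsq2L : Real.sqrt (2*L) ^ 2 = 2 * L := Real.sq_sqrt h2L
  have hut : ‖u t‖ ≤ ‖u 0‖ + Real.sqrt (2*L) := by
    have h := Real.sqrt_le_sqrt hu2
    rw [Real.sqrt_sq (norm_nonneg _)] at h
    refine h.trans ?_
    have hle : ‖u 0‖ ^ 2 + 2 * L ≤ (‖u 0‖ + Real.sqrt (2*L)) ^ 2 := by
      nlinarith [Real.sqrt_nonneg (2*L), norm_nonneg (u 0)]
    calc Real.sqrt (‖u 0‖ ^ 2 + 2 * L)
        ≤ Real.sqrt ((‖u 0‖ + Real.sqrt (2*L)) ^ 2) := Real.sqrt_le_sqrt hle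
      _ = ‖u 0‖ + Real.sqrt (2*L) := Real.sqrt_sq (by positivity)
  have hBA0 : (0:ℝ) ≤ B₀ / A := div_nonneg hB₀0 hApos.le
  have hCA0 : (0:ℝ) ≤ C₀ / A := div_nonneg hC₀0 hApos.le
  have hwt : ‖u t + v t‖ ≤ (‖u 0‖ + ‖v 0‖) + Real.sqrt (B₀ / A) / 2
      + Real.sqrt (C₀ / A) / 2 * ‖u 0‖ := by
    have h := Real.sqrt_le_sqrt hw2
    rw [Real.sqrt_sq (norm_nonneg _)] at h
    refine h.trans ?_
    have e : ‖u 0 + v 0‖ ^ 2 + (B₀ + C₀ * ‖u 0‖ ^ 2) / (4 * A)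
        = ‖u 0 + v 0‖ ^ 2 + (B₀ / A / 4 + (C₀ / A) * ‖u 0‖ ^ 2 / 4) := by
      field_simp
    rw [e]
    have s1 : Real.sqrt (B₀ / A / 4) = Real.sqrt (B₀ / A) / 2 := by
      rw [show B₀ / A / 4 = (Real.sqrt (B₀ / A) / 2) ^ 2 by
        rw [div_pow, Real.sq_sqrt hBA0]; norm_num]
      exact Real.sqrt_sq (by positivity)
    have s2 : Real.sqrt ((C₀ / A) * ‖u 0‖ ^ 2 / 4) = Real.sqrt (C₀ / A) / 2 * ‖u 0‖ := by
      rw [show (C₀ / A) * ‖u 0‖ ^ 2 / 4 = (Real.sqrt (C₀ / A) / 2 * ‖u 0‖) ^ 2 by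
        rw [mul_pow, div_pow, Real.sq_sqrt hCA0]; ring]
      exact Real.sqrt_sq (by positivity)
    calc Real.sqrt (‖u 0 + v 0‖ ^ 2 + (B₀ / A / 4 + (C₀ / A) * ‖u 0‖ ^ 2 / 4))
        ≤ Real.sqrt (‖u 0 + v 0‖ ^ 2)
          + Real.sqrt (B₀ / A / 4 + (C₀ / A) * ‖u 0‖ ^ 2 / 4) :=
          sqrt_add_le' (by positivity) (by positivity)
      _ ≤ Real.sqrt (‖u 0 + v 0‖ ^ 2)
          + (Real.sqrt (B₀ / A / 4) + Real.sqrt ((C₀ / A) * ‖u 0‖ ^ 2 / 4)) := by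
          have := sqrt_add_le' (show (0:ℝ) ≤ B₀ / A / 4 by positivity)
            (show (0:ℝ) ≤ (C₀ / A) * ‖u 0‖ ^ 2 / 4 by positivity)
          linarith
      _ = ‖u 0 + v 0‖ + (Real.sqrt (B₀ / A) / 2 + Real.sqrt (C₀ / A) / 2 * ‖u 0‖) := by
          rw [Real.sqrt_sq (norm_nonneg _), s1, s2]
      _ ≤ (‖u 0‖ + ‖v 0‖) + Real.sqrt (B₀ / A) / 2
          + Real.sqrt (C₀ / A) / 2 * ‖u 0‖ := by
          have := norm_add_le (u 0) (v 0)
          linarith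
  have hvt : ‖v t‖ ≤ ‖u t + v t‖ + ‖u t‖ := by
    calc ‖v t‖ = ‖(u t + v t) - u t‖ := by congr 1; abel
      _ ≤ ‖u t + v t‖ + ‖u t‖ := norm_sub_le _ _
  have hRA := Real.sqrt_nonneg (C₀ / A)
  have hRB := Real.sqrt_nonneg (B₀ / A)
  nlinarith [norm_nonneg (u 0), norm_nonneg (v 0),
    mul_nonneg hRA (norm_nonneg (u 0)), mul_nonneg hRA (norm_nonneg (v 0))]
end

section
/- L² energy bound for the u-component: let T > 0, let u : [0, T] → L²(Ω) be a continuously differentiable curve and v : [0, T] → L²(Ω) an arbitrary curve, and suppose that for every t ∈ [0, T]: (u′(t), u(t)) + d_u B[u(t), u(t)] = (−σ(u(t))σ(v(t))² + f(1 − u(t)), u(t)), where compositions with σ are pointwise. Then ‖u(t)‖² ≤ ‖u(0)‖² + 2L for all t ∈ [0, T]. -/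
open MeasureTheory Set Real

/-- L² energy bound for the `u`-component of the truncated nonlocal Gray–Scott system:
under the tested-by-`u(t)` weak equation, `‖u(t)‖² ≤ ‖u(0)‖² + 2L` on `[0, T]`. -/
theorem u_energy_bound (L : ℝ) (hL : 0 < L) (M : ℝ) (hM : 0 < M)
    (σ : ℝ → ℝ) (hσ : ContDiff ℝ 1 σ)
    (hσ'0 : ∀ z, 0 ≤ deriv σ z) (hσ'1 : ∀ z, deriv σ z ≤ 1)
    (hσb : ∀ z, |σ z| ≤ 2 * M) (hσsign : ∀ z, 0 ≤ σ z * z)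
    (B : Lp ℝ 2 (muOmega L) →ₗ[ℝ] Lp ℝ 2 (muOmega L) →ₗ[ℝ] ℝ)
    (hBpos : ∀ w, 0 ≤ B w w) (hBbdd : ∀ w ψ, |B w ψ| ≤ ‖w‖ * ‖ψ‖)
    (du dv f κ : ℝ) (hdu : 0 ≤ du) (hdv : 0 ≤ dv) (hf : 0 < f) (hκ : 0 < κ)
    (T : ℝ) (hT : 0 < T)
    (u u' v : ℝ → Lp ℝ 2 (muOmega L))
    (hu'cont : ContinuousOn u' (Icc 0 T))
    (hud : ∀ t ∈ Icc (0:ℝ) T, HasDerivWithinAt u (u' t) (Icc 0 T) t)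
    (heq : ∀ t ∈ Icc (0:ℝ) T,
      (∫ x, (u' t) x * (u t) x ∂muOmega L) + du * B (u t) (u t) =
        ∫ x, (-(σ ((u t) x)) * (σ ((v t) x)) ^ 2 + f * (1 - (u t) x)) * (u t) x
          ∂muOmega L) :
    ∀ t ∈ Icc (0:ℝ) T, ‖u t‖ ^ 2 ≤ ‖u 0‖ ^ 2 + 2 * L := by
  have hμfin : IsFiniteMeasure (muOmega L) := by
    constructor
    rw [muOmega, Measure.restrict_apply_univ, Real.volume_Icc]
    exact ENNReal.ofReal_lt_top
  have hmass : ∫ (_ : ℝ), (1 : ℝ) ∂muOmega L = 2 * L := by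
    rw [integral_const, smul_eq_mul, mul_one, muOmega,
      measureReal_restrict_apply_univ, measureReal_def, Real.volume_Icc, ENNReal.toReal_ofReal (by linarith)]
    ring
  set E : ℝ → ℝ := fun s => ‖u s‖ ^ 2 with hE
  have hEint : ∀ s, E s = ∫ x, u s x * u s x ∂muOmega L := by
    intro s
    show ‖u s‖ ^ 2 = _
    rw [← real_inner_self_eq_norm_sq, L2.inner_def]
    simp [RCLike.inner_apply]
    simp only [sq]
  have hEderiv : ∀ s ∈ Icc (0:ℝ) T,
      HasDerivWithinAt E (2 * ∫ x, u' s x * u s x ∂muOmega L) (Icc 0 T) s := by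
    intro s hs
    have h1 := (hud s hs).inner ℝ (hud s hs)
    have ha : (inner ℝ (u' s) (u s) : ℝ) = ∫ x, u' s x * u s x ∂muOmega L := by
      rw [L2.inner_def]
      simp only [RCLike.inner_apply', conj_trivial]
    have h2 : (inner ℝ (u s) (u' s) : ℝ) + inner ℝ (u' s) (u s) =
        2 * ∫ x, u' s x * u s x ∂muOmega L := by
      rw [real_inner_comm (u' s) (u s), ha]; ring
    have h3 : E = fun t => (inner ℝ (u t) (u t) : ℝ) := by
      funext t; exact (real_inner_self_eq_norm_sq (u t)).symm
    rw [h3, ← h2]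
    exact h1
  have hkey : ∀ s ∈ Icc (0:ℝ) T,
      2 * (∫ x, u' s x * u s x ∂muOmega L) ≤ f * (2 * L - E s) := by
    intro s hs
    have hu1 : Integrable (fun x => u s x) (muOmega L) :=
      (Lp.memLp (u s)).integrable (by norm_num)
    have huu : Integrable (fun x => u s x * u s x) (muOmega L) := by
      have := L2.integrable_inner (𝕜 := ℝ) (u s) (u s)
      simpa [RCLike.inner_apply, sq] using this
    have hhint : Integrable (fun x => f / 2 * (1 - u s x * u s x)) (muOmega L) :=
      ((integrable_const (1:ℝ)).sub huu).const_mul _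
    have hmeas : AEStronglyMeasurable
        (fun x => (-(σ ((u s) x)) * (σ ((v s) x)) ^ 2 + f * (1 - (u s) x)) * (u s) x) (muOmega L) := by
      have hus := Lp.aestronglyMeasurable (u s)
      have hvs := Lp.aestronglyMeasurable (v s)
      have hσu : AEStronglyMeasurable (fun x => σ (u s x)) (muOmega L) :=
        hσ.continuous.comp_aestronglyMeasurable hus
      have hσv : AEStronglyMeasurable (fun x => σ (v s x)) (muOmega L) :=
        hσ.continuous.comp_aestronglyMeasurable hvs
      exact ((hσu.neg.mul (hσv.pow 2)).add
        (aestronglyMeasurable_const.mul (aestronglyMeasurable_const.sub hus))).mul hus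
    have hgint : Integrable
        (fun x => (-(σ ((u s) x)) * (σ ((v s) x)) ^ 2 + f * (1 - (u s) x)) * (u s) x) (muOmega L) := by
      have hdom : Integrable
          (fun x => (2 * M * ((2 * M) ^ 2) + f) * |u s x| + f * (u s x * u s x)) (muOmega L) :=
        (hu1.abs.const_mul _).add (huu.const_mul f)
      refine hdom.mono' hmeas (Filter.Eventually.of_forall fun x => ?_)
      rw [Real.norm_eq_abs]
      have hb1' := abs_le.mp (hσb (u s x))
      have hb2' : (σ ((v s) x)) ^ 2 ≤ (2 * M) ^ 2 := by
        nlinarith [abs_le.mp (hσb (v s x)), abs_nonneg (σ (v s x)), le_abs_self (σ (v s x)),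
          neg_abs_le (σ (v s x))]
      have h1 : |(-(σ ((u s) x)) * (σ ((v s) x)) ^ 2 + f * (1 - (u s) x)) * (u s) x|
          ≤ (|(-(σ ((u s) x))) * (σ ((v s) x)) ^ 2| + |f * (1 - (u s) x)|) * |u s x| := by
        rw [abs_mul]
        gcongr
        exact abs_add_le _ _
      refine h1.trans ?_
      have h2 : |(-(σ ((u s) x))) * (σ ((v s) x)) ^ 2| ≤ 2 * M * ((2 * M) ^ 2) := by
        rw [abs_mul, abs_neg, abs_of_nonneg (sq_nonneg (σ ((v s) x)))]
        have := abs_le.mp (hσb (u s x))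
        exact mul_le_mul (hσb _) hb2' (sq_nonneg _) (by linarith)
      have h3 : |f * (1 - (u s) x)| ≤ f + f * |u s x| := by
        rw [abs_mul, abs_of_pos hf]
        have : |1 - u s x| ≤ 1 + |u s x| :=
          (abs_sub _ _).trans (by rw [abs_one])
        nlinarith
      nlinarith [abs_nonneg (u s x), sq_abs (u s x), sq_nonneg (u s x),
        mul_le_mul_of_nonneg_right h2 (abs_nonneg (u s x)),
        mul_le_mul_of_nonneg_right h3 (abs_nonneg (u s x))]
    have hcomp : (∫ x, (-(σ ((u s) x)) * (σ ((v s) x)) ^ 2 + f * (1 - (u s) x)) * (u s) x ∂muOmega L)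
        ≤ ∫ x, f / 2 * (1 - u s x * u s x) ∂muOmega L := by
      refine integral_mono hgint hhint fun x => ?_
      have hsg := hσsign (u s x)
      have hsq := sq_nonneg (σ ((v s) x))
      have := mul_nonneg (mul_nonneg hsg hsq) (le_of_eq rfl : (0:ℝ) ≤ 0)
      nlinarith [mul_nonneg hsg hsq, mul_nonneg hf.le (sq_nonneg (1 - u s x))]
    have hrhs : (∫ x, f / 2 * (1 - u s x * u s x) ∂muOmega L) = f / 2 * (2 * L - E s) := by
      rw [integral_const_mul, integral_sub (integrable_const 1) huu, hmass, hEint s]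
    have hBnn : 0 ≤ du * B (u s) (u s) := mul_nonneg hdu (hBpos _)
    have heqs := heq s hs
    linarith [hrhs ▸ hcomp]
  -- Gronwall
  set G : ℝ → ℝ := fun s => Real.exp (f * s) * (E s - 2 * L) with hG
  have hGderiv : ∀ s ∈ Icc (0:ℝ) T,
      HasDerivWithinAt G (Real.exp (f * s) * f * (E s - 2 * L) +
        Real.exp (f * s) * (2 * ∫ x, u' s x * u s x ∂muOmega L)) (Icc 0 T) s := by
    intro s hs
    have hlin : HasDerivAt (fun r : ℝ => f * r) f s := by
      simpa using (hasDerivAt_id s).const_mul f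
    have hexp : HasDerivAt (fun r : ℝ => Real.exp (f * r)) (Real.exp (f * s) * f) s :=
      (Real.hasDerivAt_exp (f * s)).comp s hlin
    have := hexp.hasDerivWithinAt.mul ((hEderiv s hs).sub_const (2 * L))
    simpa [hG, Pi.mul_def, mul_comm, mul_assoc, mul_left_comm] using this
  have hGcont : ContinuousOn G (Icc 0 T) := fun s hs => (hGderiv s hs).continuousWithinAt
  have hGderivAt : ∀ x ∈ Ioo (0:ℝ) T,
      HasDerivAt G (Real.exp (f * x) * f * (E x - 2 * L) +
        Real.exp (f * x) * (2 * ∫ y, u' x y * u x y ∂muOmega L)) x := fun x hx =>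
    (hGderiv x (Ioo_subset_Icc_self hx)).hasDerivAt (Icc_mem_nhds hx.1 hx.2)
  have hGdiff : DifferentiableOn ℝ G (interior (Icc 0 T)) := by
    rw [interior_Icc]
    exact fun x hx => (hGderivAt x hx).differentiableAt.differentiableWithinAt
  have hGnonpos : ∀ x ∈ interior (Icc (0:ℝ) T), deriv G x ≤ 0 := by
    rw [interior_Icc]
    intro x hx
    rw [(hGderivAt x hx).deriv]
    have hk := hkey x (Ioo_subset_Icc_self hx)
    have hexppos := Real.exp_pos (f * x)
    nlinarith [mul_le_mul_of_nonneg_left hk hexppos.le]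
  have hanti := antitoneOn_of_deriv_nonpos (convex_Icc 0 T) hGcont hGdiff hGnonpos
  intro t ht
  have hGt := hanti ⟨le_refl 0, hT.le⟩ ht ht.1
  have h2 : Real.exp (f * t) * (E t - 2 * L) ≤ E 0 - 2 * L := by
    simpa [hG] using hGt
  have h1 : 1 ≤ Real.exp (f * t) := Real.one_le_exp (mul_nonneg hf.le ht.1)
  have hE0 : 0 ≤ E 0 := by positivity
  show E t ≤ E 0 + 2 * L
  rcases le_or_gt (E t) (2 * L) with h | h
  · linarith
  · nlinarith
end
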